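/- arXiv:2107.00213 — 9 statements merged into one kernel-verified Lean document; each statement's English description precedes it below -/
import Mathlib

section
/- For every integer n ≥ 1, the strong equitable vertex 1-arboricity of the complete bipartite graph K_{1,n} equals ⌈(n+2)/3⌉. That is, ⌈(n+2)/3⌉ is the minimum p such that for every q ≥ p, the vertex set of K_{1,n} can be partitioned into q classes whose sizes pairwise differ by at most 1, each class inducing a forest of maximum degree at most 1. -/
open Finset

/-- The complete multipartite graph with parts of sizes `n 0, …, n (k-1)`. -/
def CompleteMultipartite (k : ℕ) (n : Fin k → ℕ) :
    SimpleGraph (Σ i : Fin k, Fin (n i)) where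
  Adj v w := v.1 ≠ w.1
  symm := ⟨fun _ _ h => h.symm⟩
  loopless := ⟨fun _ h => h rfl⟩

/-- The sizes of any two color classes of `C` differ by at most one. -/
def EquitableSizes {V : Type} [Fintype V] {q : ℕ} (C : V → Fin q) : Prop :=
  ∀ i j : Fin q,
    (univ.filter (fun v => C v = i)).card ≤ (univ.filter (fun v => C v = j)).card + 1

/-- An equitable `(q,1)`-tree-coloring: classes of sizes pairwise differing by at
most one, each inducing a forest of maximum degree at most 1 (equivalently,
maximum degree at most 1 inside each class). -/
def IsEqTreeColoring {V : Type} [Fintype V] (G : SimpleGraph V) (q : ℕ) : Prop :=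
  ∃ C : V → Fin q, EquitableSizes C ∧
    ∀ v w x : V, C w = C v → C x = C v → G.Adj v w → G.Adj v x → w = x

/-- An equitable `q`-coloring: a proper coloring with classes of sizes pairwise
differing by at most one. -/
def IsEqColoring {V : Type} [Fintype V] (G : SimpleGraph V) (q : ℕ) : Prop :=
  ∃ C : V → Fin q, EquitableSizes C ∧ ∀ v w : V, G.Adj v w → C v ≠ C w

/-- The number `d` of Definition 1: the minimum integer `d ≥ ⌈N/q⌉` such that
either two of the `n i` are not divisible by `d`, or some `n i` satisfies
`n i / ⌊n i / d⌋ > d + 1`. -/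
noncomputable def dOf (k q : ℕ) (n : Fin k → ℕ) : ℕ :=
  sInf {d : ℕ | ((∑ i, n i) + q - 1) / q ≤ d ∧
    ((∃ i j : Fin k, i ≠ j ∧ ¬ d ∣ n i ∧ ¬ d ∣ n j) ∨
     (∃ i : Fin k, ((n i : ℚ) / ((n i / d : ℕ) : ℚ) > d + 1)))}

/-- `p(q : n₁, …, n_k) = ⌈n₁/d⌉ + ⋯ + ⌈n_k/d⌉`. -/
noncomputable def pOf (k q : ℕ) (n : Fin k → ℕ) : ℕ :=
  ∑ i, (n i + dOf k q n - 1) / dOf k q n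


lemma my_div_eq_iff {b : ℕ} (hb : 0 < b) (t i : ℕ) :
    t / b = i ↔ i * b ≤ t ∧ t < (i + 1) * b := by
  constructor
  · rintro rfl
    exact ⟨Nat.div_mul_le_self t b, (Nat.div_lt_iff_lt_mul hb).mp (Nat.lt_succ_self _)⟩
  · rintro ⟨h1, h2⟩
    have l1 : i ≤ t / b := (Nat.le_div_iff_mul_le hb).mpr h1
    have l2 : t / b < i + 1 := (Nat.div_lt_iff_lt_mul hb).mpr h2
    omega

/-- item `t` ↦ its class, where classes `0..r-1` have size `m+1` and the rest size `m`. -/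
def fcol (m r t : ℕ) : ℕ :=
  if t < r * (m + 1) then t / (m + 1) else r + (t - r * (m + 1)) / m

lemma fcol_eq_iff {q m r i t : ℕ} (hr : r < q) (hi : i < q) (ht : t < q * m + r) :
    fcol m r t = i ↔ i * m + min i r ≤ t ∧ t < i * m + m + min (i + 1) r := by
  have e1 : i * (m+1) = i*m + i := by ring
  have e2 : (i+1) * (m+1) = i*m + m + i + 1 := by ring
  have e3 : r * (m+1) = r*m + r := by ring
  unfold fcol
  split_ifs with h
  · rw [my_div_eq_iff (show 0 < m + 1 by omega)]
    rcases Nat.lt_or_ge i r with hir | hir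
    · omega
    · have e4 : r * m ≤ i * m := Nat.mul_le_mul_right m hir
      omega
  · push_neg at h
    have hm : 0 < m := by
      rcases Nat.eq_zero_or_pos m with rfl | hm
      · simp at ht h; omega
      · exact hm
    rcases Nat.lt_or_ge i r with hir | hir
    · -- LHS false since fcol ≥ r > i; RHS false
      have e5 : (i+1) * m ≤ r * m := Nat.mul_le_mul_right m hir
      have e6 : (i+1) * m = i*m + m := by ring
      constructor
      · intro he
        have hg : r ≤ r + (t - r*(m+1)) / m := Nat.le_add_right _ _
        omega
      · rintro ⟨h1, h2⟩; omega
    · have hmin1 : min i r = r := Nat.min_eq_right hir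
      have hmin2 : min (i+1) r = r := Nat.min_eq_right (by omega)
      rw [hmin1, hmin2]
      have e5 : (i-r) * m + r * m = i * m := by
        have e : (i - r + r) * m = i * m := by rw [Nat.sub_add_cancel hir]
        rw [← e]; ring
      have e6 : (i-r+1) * m = (i-r)*m + m := by ring
      constructor
      · intro he
        have hd : (t - r*(m+1)) / m = i - r := by omega
        rw [my_div_eq_iff hm] at hd
        omega
      · rintro ⟨h1, h2⟩
        have hd : (t - r*(m+1)) / m = i - r := by
          rw [my_div_eq_iff hm]
          omega
        omega

lemma fcol_lt {q m r t : ℕ} (hr : r < q) (ht : t < q * m + r) : fcol m r t < q := by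
  unfold fcol
  split_ifs with h
  · have := (Nat.div_lt_iff_lt_mul (show 0 < m + 1 by omega)).mpr h
    omega
  · push_neg at h
    have hm : 0 < m := by
      rcases Nat.eq_zero_or_pos m with rfl | hm
      · simp at ht h; omega
      · exact hm
    have e3 : r * (m+1) = r*m + r := by ring
    have hu : t - r*(m+1) < (q - r) * m := by
      have e : (q-r) * m + r * m = q * m := by
        have e2 : (q - r + r) * m = q * m := by rw [Nat.sub_add_cancel (le_of_lt hr)]
        rw [← e2]; ring
      omega
    have := (Nat.div_lt_iff_lt_mul hm).mpr hu
    omega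

lemma fcol_filter_card {q m r : ℕ} (hr : r < q) (i : ℕ) (hi : i < q) :
    ((Finset.range (q*m+r)).filter (fun t => fcol m r t = i)).card
      = m + min (i+1) r - min i r := by
  have hset : ((Finset.range (q*m+r)).filter (fun t => fcol m r t = i))
      = Finset.Ico (i*m + min i r) (i*m + m + min (i+1) r) := by
    ext t
    simp only [Finset.mem_filter, Finset.mem_range, Finset.mem_Ico]
    constructor
    · rintro ⟨ht, he⟩
      exact (fcol_eq_iff hr hi ht).mp he
    · rintro ⟨h1, h2⟩
      have ht : t < q * m + r := by
        have e1 : (i+1) * m ≤ q * m := Nat.mul_le_mul_right m hi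
        have e2 : (i+1)*m = i*m + m := by ring
        omega
      exact ⟨ht, (fcol_eq_iff hr hi ht).mpr ⟨h1, h2⟩⟩
  rw [hset, Nat.card_Ico]
  omega

def centerV (n : ℕ) : Σ i : Fin 2, Fin (![1, n] i) := ⟨0, ⟨0, Nat.one_pos⟩⟩

def vidx (n : ℕ) (v : Σ i : Fin 2, Fin (![1, n] i)) : ℕ :=
  if v.1 = 0 then n else (v.2 : ℕ)

lemma vidx_lt (n : ℕ) (v : Σ i : Fin 2, Fin (![1, n] i)) : vidx n v < n + 1 := by
  unfold vidx
  split_ifs with h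
  · omega
  · have h1 : v.1 = 1 := by
      apply Fin.ext
      have := v.1.isLt
      have h2 : v.1.val ≠ 0 := fun hh => h (Fin.ext hh)
      simp only [Fin.val_one]; omega
    have h3 := v.2.isLt
    have h4 : (![1, n] v.fst) = n := by rw [h1]; simp
    omega

lemma vidx_center (n : ℕ) : vidx n (centerV n) = n := rfl

lemma vidx_inj (n : ℕ) (v w : Σ i : Fin 2, Fin (![1, n] i)) (h : vidx n v = vidx n w) :
    v = w := by
  rcases v with ⟨vi, vj⟩
  rcases w with ⟨wi, wj⟩
  have fin2 : ∀ a : Fin 2, a = 0 ∨ a = 1 := by decide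
  have hlt : ∀ j : Fin (![1, n] 1), (j : ℕ) < n := by
    intro j; have := j.isLt
    simpa using this
  rcases fin2 vi with rfl | rfl <;> rcases fin2 wi with rfl | rfl <;>
    simp only [vidx] at h
  · congr 1
    apply Fin.ext
    have h1 : (vj : ℕ) < 1 := vj.isLt
    have h2 : (wj : ℕ) < 1 := wj.isLt
    omega
  · simp at h
    have := hlt wj; omega
  · simp at h
    have := hlt vj; omega
  · simp at h
    congr 1
    exact Fin.ext h

lemma eq_center (n : ℕ) (v : Σ i : Fin 2, Fin (![1, n] i)) (h : v.1 = 0) :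
    v = centerV n := by
  apply vidx_inj
  simp [vidx, h, centerV]


lemma fcol_last {q m r : ℕ} (hq : 1 ≤ q) (hm : 1 ≤ m) (hr : r < q) :
    fcol m r (q*m + r - 1) = q - 1 := by
  have h1 : 1*1 ≤ q*m := Nat.mul_le_mul hq hm
  have ht : q*m + r - 1 < q*m + r := by omega
  apply (fcol_eq_iff hr (by omega) ht).mpr
  have e1 : (q-1)*m + m = q*m := by
    have e : (q-1+1)*m = q*m := by rw [Nat.sub_add_cancel hq]
    rw [← e]; ring
  have hmin1 : min (q-1) r ≤ r := min_le_right _ _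
  have hmin2 : min (q-1+1) r = r := by
    rw [Nat.sub_add_cancel hq]; exact Nat.min_eq_right (le_of_lt hr)
  omega

lemma fiber_card {n q m r : ℕ} (hr : r < q) (hs : q*m+r = n+1)
    (C : (Σ i : Fin 2, Fin (![1, n] i)) → Fin q)
    (hC : ∀ v, (C v : ℕ) = fcol m r (vidx n v)) (i : Fin q) :
    (univ.filter (fun v => C v = i)).card = m + min (i.1+1) r - min i.1 r := by
  rw [← fcol_filter_card hr i.1 i.isLt]
  apply Finset.card_bij (fun v _ => vidx n v)
  · intro v hv
    simp only [mem_filter, mem_univ, true_and] at hv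
    simp only [mem_filter, mem_range]
    constructor
    · rw [hs]; exact vidx_lt n v
    · rw [← hC v, hv]
  · intro a _ b _ hab
    exact vidx_inj n a b hab
  · intro t ht
    simp only [mem_filter, mem_range] at ht
    obtain ⟨ht1, ht2⟩ := ht
    rcases Nat.lt_or_ge t n with h | h
    · refine ⟨⟨1, ⟨t, h⟩⟩, ?_, ?_⟩
      · simp only [mem_filter, mem_univ, true_and]
        apply Fin.ext
        rw [hC _]
        have hvt : vidx n ⟨1, ⟨t, h⟩⟩ = t := by simp [vidx]
        rw [hvt, ht2]
      · simp [vidx]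
    · have hteq : t = n := by rw [hs] at ht1; omega
      refine ⟨centerV n, ?_, ?_⟩
      · simp only [mem_filter, mem_univ, true_and]
        apply Fin.ext
        rw [hC _, vidx_center, ← hteq, ht2]
      · rw [vidx_center, hteq]

lemma exists_coloring (n q : ℕ) (h3 : n + 2 ≤ 3*q) :
    IsEqTreeColoring (CompleteMultipartite 2 ![1, n]) q := by
  have hq : 1 ≤ q := by omega
  set m := (n+1)/q with hm
  set r := (n+1)%q with hrdef
  have hs : q*m+r = n+1 := Nat.div_add_mod (n+1) q
  have hr : r < q := Nat.mod_lt _ hq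
  have hm2 : m ≤ 2 := by
    have h := (Nat.div_lt_iff_lt_mul hq).mpr (show n+1 < 3*q by omega)
    omega
  set C : (Σ i : Fin 2, Fin (![1, n] i)) → Fin q :=
    fun v => ⟨fcol m r (vidx n v), fcol_lt hr (by rw [hs]; exact vidx_lt n v)⟩ with hCdef
  have hC : ∀ v, (C v : ℕ) = fcol m r (vidx n v) := fun v => rfl
  have hcc : m + min (fcol m r n + 1) r - min (fcol m r n) r ≤ 2 := by
    rcases Nat.lt_or_ge m 1 with h0 | h1
    · omega
    · have hl : fcol m r n = q - 1 := by
        rw [show n = q*m+r-1 by omega]; exact fcol_last hq h1 hr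
      rw [hl]
      have l1 : min (q-1+1) r = r := by
        rw [Nat.sub_add_cancel hq]; exact Nat.min_eq_right (le_of_lt hr)
      have l2 : min (q-1) r = r := Nat.min_eq_right (by omega)
      omega
  refine ⟨C, ?_, ?_⟩
  · intro i j
    rw [fiber_card hr hs C hC i, fiber_card hr hs C hC j]
    omega
  · intro v w x hw hx avw avx
    have hvw : v.1 ≠ w.1 := avw
    have hvx : v.1 ≠ x.1 := avx
    have fin2 : ∀ a : Fin 2, a = 0 ∨ a = 1 := by decide
    by_cases hv : v.1 = 0
    · -- v is the center
      have hveq : v = centerV n := eq_center n v hv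
      by_contra hwx
      have hvw' : v ≠ w := fun h => hvw (congrArg Sigma.fst h)
      have hvx' : v ≠ x := fun h => hvx (congrArg Sigma.fst h)
      have hsub : ({v, w, x} : Finset _) ⊆ univ.filter (fun u => C u = C v) := by
        intro u hu
        simp only [mem_insert, mem_singleton] at hu
        simp only [mem_filter, mem_univ, true_and]
        rcases hu with rfl | rfl | rfl
        · rfl
        · exact hw
        · exact hx
      have h3c : ({v, w, x} : Finset _).card = 3 := by
        rw [card_insert_of_notMem (by simp [hvw', hvx']),
          card_insert_of_notMem (by simp [hwx]), card_singleton]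
      have hle := card_le_card hsub
      have hcv : (C v : ℕ) = fcol m r n := by rw [hC v, hveq, vidx_center]
      have hfc := fiber_card hr hs C hC (C v)
      rw [hcv] at hfc
      omega
    · -- v is a leaf; w and x must both be the center
      have hv1 : v.1 = 1 := (fin2 v.1).resolve_left hv
      have hw0 : w.1 = 0 := by
        rcases fin2 w.1 with h | h
        · exact h
        · exact absurd (hv1.trans h.symm) hvw
      have hx0 : x.1 = 0 := by
        rcases fin2 x.1 with h | h
        · exact h
        · exact absurd (hv1.trans h.symm) hvx
      rw [eq_center n w hw0, eq_center n x hx0]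

lemma not_coloring (n q : ℕ) (hq : 1 ≤ q) (h3 : 3*q ≤ n+1) :
    ¬ IsEqTreeColoring (CompleteMultipartite 2 ![1, n]) q := by
  rintro ⟨C, heq, htree⟩
  set i0 := C (centerV n) with hi0
  have huniq : ∀ w x, C w = i0 → C x = i0 → w.1 ≠ (0 : Fin 2) → x.1 ≠ 0 → w = x := by
    intro w x hw hx hw1 hx1
    refine htree (centerV n) w x hw hx ?_ ?_
    · exact fun h => hw1 (h.symm : w.1 = (centerV n).1)
    · exact fun h => hx1 (h.symm : x.1 = (centerV n).1)
  have hc2 : (univ.filter (fun v => C v = i0)).card ≤ 2 := by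
    by_cases hex : ∃ w, C w = i0 ∧ w.1 ≠ (0 : Fin 2)
    · obtain ⟨w, hw, hw1⟩ := hex
      have hsub : univ.filter (fun v => C v = i0) ⊆ {centerV n, w} := by
        intro u hu
        simp only [mem_filter, mem_univ, true_and] at hu
        simp only [mem_insert, mem_singleton]
        by_cases hu1 : u.1 = 0
        · exact Or.inl (eq_center n u hu1)
        · exact Or.inr (huniq u w hu hw hu1 hw1)
      have := card_le_card hsub
      have h2 : ({centerV n, w} : Finset _).card ≤ 2 :=
        (Finset.card_insert_le _ _).trans (by simp)
      omega
    · push_neg at hex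
      have hsub : univ.filter (fun v => C v = i0) ⊆ {centerV n} := by
        intro u hu
        simp only [mem_filter, mem_univ, true_and] at hu
        simp only [mem_singleton]
        exact eq_center n u (by_contra fun h => h (hex u hu))
      have := card_le_card hsub
      simp at this
      omega
  have hall : ∀ j : Fin q, (univ.filter (fun v => C v = j)).card ≤ 3 :=
    fun j => (heq j i0).trans (by omega)
  have htot : n + 1 = ∑ j : Fin q, (univ.filter (fun v => C v = j)).card := by
    have h1 := Finset.card_eq_sum_card_fiberwise
      (f := C) (s := univ) (t := univ) (fun v _ => mem_univ _)
    have h2 : (univ : Finset ((i : Fin 2) × Fin (![1, n] i))).card = n + 1 := by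
      rw [Finset.card_univ, Fintype.card_sigma, Fin.sum_univ_two, Fintype.card_fin, Fintype.card_fin]
      simp
      omega
    rw [← h2, h1]
  have hsplit := (Finset.add_sum_erase univ
    (fun j => (univ.filter (fun v => C v = j)).card) (mem_univ i0)).symm
  have herase : ∑ j ∈ univ.erase i0, (univ.filter (fun v => C v = j)).card ≤ (q-1) * 3 := by
    have h := Finset.sum_le_card_nsmul (univ.erase i0)
      (fun j => (univ.filter (fun v => C v = j)).card) 3 (fun j _ => hall j)
    have hce : (univ.erase i0).card = q - 1 := by
      rw [Finset.card_erase_of_mem (mem_univ i0), Finset.card_univ, Fintype.card_fin]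
    rw [hce, smul_eq_mul] at h
    exact h
  omega

theorem stmt0 (n : ℕ) (hn : 1 ≤ n) :
    IsLeast {p : ℕ | ∀ q, p ≤ q →
        IsEqTreeColoring (CompleteMultipartite 2 ![1, n]) q}
      ⌈((n : ℚ) + 2) / 3⌉₊ := by
  constructor
  · intro q hq
    have hp3 : n + 2 ≤ 3 * ⌈((n : ℚ) + 2) / 3⌉₊ := by
      have h1 := Nat.le_ceil (((n : ℚ) + 2) / 3)
      rw [div_le_iff₀ (by norm_num : (0:ℚ) < 3)] at h1
      have h2 : ((n + 2 : ℕ) : ℚ) ≤ ((3 * ⌈((n : ℚ) + 2) / 3⌉₊ : ℕ) : ℚ) := by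
        push_cast
        linarith
      exact_mod_cast h2
    exact exists_coloring n q (by omega)
  · intro x hx
    by_contra hlt
    push_neg at hlt
    set p := ⌈((n : ℚ) + 2) / 3⌉₊ with hp
    rcases Nat.lt_or_ge (p - 1) 1 with h0 | h1
    · obtain ⟨C, -, -⟩ := hx (p - 1) (by omega)
      have h0' : p - 1 = 0 := by omega
      exact (h0' ▸ C (centerV n)).elim0
    · have hup : 3 * (p - 1) ≤ n + 1 := by
        have h1' : p - 1 < p := by omega
        have h2 := (Nat.lt_ceil).mp (show p - 1 < ⌈((n : ℚ) + 2) / 3⌉₊ from h1')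
        rw [lt_div_iff₀ (by norm_num : (0:ℚ) < 3)] at h2
        have h3 : ((3 * (p - 1) : ℕ) : ℚ) < ((n + 2 : ℕ) : ℚ) := by
          push_cast
          linarith
        have h4 := (Nat.cast_lt (α := ℚ)).mp h3
        omega
      exact not_coloring n (p - 1) h1 hup (hx (p - 1) (by omega))
end

section
/- Let m = 3b+1 and n = 3c+2 for positive integers b and c. Then the complete bipartite graph K_{m,n} has no equitable (b+c+1, 1)-tree-coloring; that is, V(K_{m,n}) cannot be partitioned into b+c+1 classes of sizes pairwise differing by at most 1 such that each class induces a forest of maximum degree at most 1. -/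
open Finset

theorem stmt2 (b c : ℕ) (hb : 1 ≤ b) (hc : 1 ≤ c) :
    ¬ IsEqTreeColoring (CompleteMultipartite 2 ![3 * b + 1, 3 * c + 2]) (b + c + 1) := by
  rintro ⟨C, hEq, hTree⟩
  have hEq' : ∀ i j, (univ.filter (fun v => C v = i)).card
      ≤ (univ.filter (fun v => C v = j)).card + 1 := hEq
  have hcard : (univ : Finset (Σ i : Fin 2, Fin (![3 * b + 1, 3 * c + 2] i))).card
      = 3 * (b + c + 1) := by
    rw [Finset.card_univ]
    simp [Fintype.card_sigma, Fin.sum_univ_two]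
    omega
  have hsum : ∑ i : Fin (b + c + 1), (univ.filter (fun v => C v = i)).card
      = 3 * (b + c + 1) := by
    rw [← Finset.card_eq_sum_card_fiberwise (f := C) (t := univ) (fun x _ => mem_univ _), hcard]
  have h3 : ∀ i, (univ.filter (fun v => C v = i)).card = 3 := by
    by_contra h
    push_neg at h
    obtain ⟨i, hi⟩ := h
    rcases lt_or_gt_of_ne hi with hlt | hgt
    · have hle : ∀ j ∈ (univ : Finset (Fin (b + c + 1))),
          (univ.filter (fun v => C v = j)).card ≤ 3 := fun j _ => by
        have := hEq' j i; omega
      have := Finset.sum_lt_sum hle ⟨i, mem_univ _, hlt⟩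
      rw [hsum] at this
      simp [Finset.sum_const] at this
      omega
    · have hge : ∀ j ∈ (univ : Finset (Fin (b + c + 1))),
          3 ≤ (univ.filter (fun v => C v = j)).card := fun j _ => by
        have := hEq' i j; omega
      have := Finset.sum_lt_sum hge ⟨i, mem_univ _, hgt⟩
      rw [hsum] at this
      simp [Finset.sum_const] at this
      omega
  have hside : ∀ v w : (Σ i : Fin 2, Fin (![3 * b + 1, 3 * c + 2] i)),
      C v = C w → v.1 = w.1 := by
    intro v w hvw
    by_contra hne
    have hvw' : v ≠ w := fun h => hne (by rw [h])
    have hsub : ({v, w} : Finset _) ⊆ univ.filter (fun x => C x = C v) := by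
      intro x hx
      rcases Finset.mem_insert.mp hx with rfl | hx
      · simp
      · rw [Finset.mem_singleton] at hx; subst hx; simp [hvw.symm]
    have hpos : 0 < ((univ.filter (fun x => C x = C v)) \ ({v, w} : Finset _)).card := by
      rw [Finset.card_sdiff_of_subset hsub, h3,
        Finset.card_insert_of_notMem (by simp [hvw']), Finset.card_singleton]
      omega
    obtain ⟨u, hu⟩ := Finset.card_pos.mp hpos
    rw [Finset.mem_sdiff] at hu
    have huC : C u = C v := (Finset.mem_filter.mp hu.1).2
    have huv : u ≠ v := fun h => hu.2 (by simp [h])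
    have huw : u ≠ w := fun h => hu.2 (by simp [h])
    by_cases hu1 : u.1 = v.1
    · have : v = u := hTree w v u hvw (huC.trans hvw)
        (show w.1 ≠ v.1 from fun h => hne h.symm) (show w.1 ≠ u.1 from fun h => hne (hu1 ▸ h.symm))
      exact huv this.symm
    · have : w = u := hTree v w u hvw.symm huC (show v.1 ≠ w.1 from hne) (show v.1 ≠ u.1 from fun h => hu1 h.symm)
      exact huw this.symm
  have hinj : Function.Injective
      (fun x : Fin (![3 * b + 1, 3 * c + 2] 0) =>
        (⟨0, x⟩ : Σ i : Fin 2, Fin (![3 * b + 1, 3 * c + 2] i))) := by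
    intro x y h
    exact eq_of_heq (Sigma.mk.inj_iff.mp h).2
  have himg : (univ : Finset (Fin (![3 * b + 1, 3 * c + 2] 0))).image
        (fun x => (⟨0, x⟩ : Σ i : Fin 2, Fin (![3 * b + 1, 3 * c + 2] i)))
      = univ.filter (fun v => v.1 = 0) := by
    ext ⟨i, x⟩
    simp only [Finset.mem_image, Finset.mem_filter, Finset.mem_univ, true_and]
    constructor
    · rintro ⟨y, h⟩
      exact (congrArg Sigma.fst h).symm
    · revert x
      refine Fin.cases ?_ ?_ i
      · intro x _
        exact ⟨x, rfl⟩
      · intro j x h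
        exact absurd h (by simp [Fin.ext_iff])
  have hside0 : (univ.filter
      (fun v : Σ i : Fin 2, Fin (![3 * b + 1, 3 * c + 2] i) => v.1 = 0)).card
      = 3 * b + 1 := by
    rw [← himg, Finset.card_image_of_injective _ hinj, Finset.card_univ]
    simp
    exact Fintype.card_fin _
  have hdvd : 3 ∣ (univ.filter
      (fun v : Σ i : Fin 2, Fin (![3 * b + 1, 3 * c + 2] i) => v.1 = 0)).card := by
    rw [Finset.card_eq_sum_card_fiberwise (f := C) (t := univ) (fun x _ => mem_univ _)]
    apply Finset.dvd_sum
    intro i _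
    by_cases hne : ((univ.filter
        (fun v : Σ i : Fin 2, Fin (![3 * b + 1, 3 * c + 2] i) => v.1 = 0)).filter
        (fun v => C v = i)).Nonempty
    · obtain ⟨v, hv⟩ := hne
      simp only [Finset.mem_filter, Finset.mem_univ, true_and] at hv
      have heq : ((univ.filter
          (fun v : Σ i : Fin 2, Fin (![3 * b + 1, 3 * c + 2] i) => v.1 = 0)).filter
          (fun v => C v = i)) = univ.filter (fun v => C v = i) := by
        ext w
        simp only [Finset.mem_filter, Finset.mem_univ, true_and]
        refine ⟨fun h => h.2, fun h => ⟨?_, h⟩⟩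
        have := hside w v (by rw [h, hv.2])
        rw [this, hv.1]
      rw [heq, h3]
    · rw [Finset.not_nonempty_iff_eq_empty.mp hne]
      simp
  rw [hside0] at hdvd
  omega
end

section
/- Let m = 3b+1 and n = 3c+2 for positive integers b and c. Then the strong equitable vertex 1-arboricity of K_{m,n} equals b+c+2. -/
open Finset

lemma fiber_card_eq {V : Type} [Fintype V] (q : ℕ) (pos : V → ℕ) (N : ℕ)
    (hlt : ∀ v, pos v < N) (hinj : ∀ v w, pos v = pos w → v = w)
    (hsurj : ∀ k, k < N → ∃ v, pos v = k) (g : ℕ → ℕ)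
    (C : V → Fin q) (hC : ∀ v, (C v : ℕ) = g (pos v)) (i : Fin q) :
    (univ.filter (fun v => C v = i)).card
      = ((range N).filter (fun k => g k = (i : ℕ))).card := by
  apply Finset.card_bij (fun v _ => pos v)
  · intro v hv
    simp only [mem_filter, mem_range]
    simp only [mem_filter, mem_univ, true_and] at hv
    exact ⟨hlt v, by rw [← hC v, hv]⟩
  · intro v _ w _ h
    exact hinj v w h
  · intro k hk
    simp only [mem_filter, mem_range] at hk
    obtain ⟨v, rfl⟩ := hsurj k hk.1
    exact ⟨v, by simp [Fin.ext_iff, hC v, hk.2], rfl⟩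

def posA' (tA tB x : ℕ) : ℕ := if x < 3*tA then x else x + 3*tB
def posB' (m tA tB y : ℕ) : ℕ := if y < 3*tB then 3*tA + y else m + y
def f3' (t k : ℕ) : ℕ := if k < 3*t then k/3 else t + (k - 3*t)/2

def posT' (m n tA tB : ℕ) (v : Σ i : Fin 2, Fin (![m, n] i)) : ℕ :=
  if v.1 = 0 then posA' tA tB v.2 else posB' m tA tB v.2

lemma fin2_cases (i : Fin 2) : i = 0 ∨ i = 1 := by
  rw [Fin.ext_iff, Fin.ext_iff]
  have := i.isLt
  omega

lemma posT'_spec (m n tA tB : ℕ) (hA : 3*tA ≤ m) (hB : 3*tB ≤ n)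
    (v : Σ i : Fin 2, Fin (![m, n] i)) :
    (v.1 = 0 ∧ (posT' m n tA tB v < 3*tA ∨
      (3*(tA+tB) ≤ posT' m n tA tB v ∧ posT' m n tA tB v < m + 3*tB))) ∨
    (v.1 = 1 ∧ ((3*tA ≤ posT' m n tA tB v ∧ posT' m n tA tB v < 3*(tA+tB)) ∨
      (m + 3*tB ≤ posT' m n tA tB v ∧ posT' m n tA tB v < m + n))) := by
  rcases fin2_cases v.1 with h | h
  · left
    have key : ![m, n] v.1 = m := by rw [h]; rfl
    have hx : (v.2 : ℕ) < m := by have := v.2.isLt; omega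
    refine ⟨h, ?_⟩
    rw [posT', if_pos h]
    unfold posA'
    split_ifs <;> omega
  · right
    have key : ![m, n] v.1 = n := by rw [h]; rfl
    have hx : (v.2 : ℕ) < n := by have := v.2.isLt; omega
    refine ⟨h, ?_⟩
    rw [posT', if_neg (by rw [h]; decide)]
    unfold posB'
    split_ifs <;> omega

lemma posT'_inj (m n tA tB : ℕ) (hA : 3*tA ≤ m) (hB : 3*tB ≤ n)
    (v w : Σ i : Fin 2, Fin (![m, n] i))
    (h : posT' m n tA tB v = posT' m n tA tB w) : v = w := by
  have hv := posT'_spec m n tA tB hA hB v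
  have hw := posT'_spec m n tA tB hA hB w
  have hside : v.1 = w.1 := by
    rcases hv with ⟨h1, h2⟩ | ⟨h1, h2⟩ <;> rcases hw with ⟨h3, h4⟩ | ⟨h3, h4⟩ <;>
      rw [h1, h3] <;> omega
  have hval : (v.2 : ℕ) = (w.2 : ℕ) := by
    rcases fin2_cases v.1 with h0 | h0
    · rw [posT', posT', if_pos h0, if_pos (hside ▸ h0)] at h
      unfold posA' at h
      split_ifs at h <;> omega
    · rw [posT', posT', if_neg (by rw [h0]; decide),
        if_neg (by rw [← hside, h0]; decide)] at h
      unfold posB' at h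
      split_ifs at h <;> omega
  obtain ⟨i, x⟩ := v
  obtain ⟨j, y⟩ := w
  simp only at hside hval
  subst hside
  exact congrArg _ (Fin.ext hval)

lemma posT'_surj (m n tA tB : ℕ) (hA : 3*tA ≤ m) (hB : 3*tB ≤ n)
    (k : ℕ) (hk : k < m + n) : ∃ v, posT' m n tA tB v = k := by
  by_cases h1 : k < 3*tA
  · refine ⟨⟨0, ⟨k, show k < m by omega⟩⟩, ?_⟩
    show posA' tA tB k = k
    unfold posA'; split_ifs <;> omega
  · by_cases h2 : k < 3*(tA+tB)
    · refine ⟨⟨1, ⟨k - 3*tA, show k - 3*tA < n by omega⟩⟩, ?_⟩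
      show posB' m tA tB (k - 3*tA) = k
      unfold posB'; split_ifs <;> omega
    · by_cases h3 : k < m + 3*tB
      · refine ⟨⟨0, ⟨k - 3*tB, show k - 3*tB < m by omega⟩⟩, ?_⟩
        show posA' tA tB (k - 3*tB) = k
        unfold posA'; split_ifs <;> omega
      · refine ⟨⟨1, ⟨k - m, show k - m < n by omega⟩⟩, ?_⟩
        show posB' m tA tB (k - m) = k
        unfold posB'; split_ifs <;> omega

lemma f3'_fiber (t q N j : ℕ) (hq : t ≤ q) (hsum : t + 2*q = N) (hj : j < q) :
    ((range N).filter (fun k => f3' t k = j)).card = if j < t then 3 else 2 := by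
  rcases lt_or_ge j t with h | h
  · rw [if_pos h]
    have he : (range N).filter (fun k => f3' t k = j) = Ico (3*j) (3*j+3) := by
      ext k
      rw [mem_filter, mem_range, mem_Ico, f3']
      split_ifs <;> omega
    rw [he, Nat.card_Ico]; omega
  · rw [if_neg (by omega)]
    have he : (range N).filter (fun k => f3' t k = j)
        = Ico (3*t+2*(j-t)) (3*t+2*(j-t)+2) := by
      ext k
      rw [mem_filter, mem_range, mem_Ico, f3']
      split_ifs <;> omega
    rw [he, Nat.card_Ico]; omega

lemma triples_coloring (m n q tA tB : ℕ) (hA : 3*tA ≤ m) (hB : 3*tB ≤ n)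
    (hq : tA + tB ≤ q) (hsum : (tA+tB) + 2*q = m + n) :
    IsEqTreeColoring (CompleteMultipartite 2 ![m, n]) q := by
  have hplt : ∀ v : Σ i : Fin 2, Fin (![m,n] i), posT' m n tA tB v < m + n := by
    intro v
    rcases posT'_spec m n tA tB hA hB v with ⟨_, h⟩ | ⟨_, h⟩ <;> omega
  have hflt : ∀ v : Σ i : Fin 2, Fin (![m,n] i),
      f3' (tA+tB) (posT' m n tA tB v) < q := by
    intro v
    have := hplt v
    unfold f3'; split_ifs <;> omega
  refine ⟨fun v => ⟨f3' (tA+tB) (posT' m n tA tB v), hflt v⟩, ?_, ?_⟩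
  · intro i j
    rw [fiber_card_eq q (posT' m n tA tB) (m+n) hplt (posT'_inj m n tA tB hA hB)
        (posT'_surj m n tA tB hA hB) (f3' (tA+tB)) _ (fun v => rfl) i,
      fiber_card_eq q (posT' m n tA tB) (m+n) hplt (posT'_inj m n tA tB hA hB)
        (posT'_surj m n tA tB hA hB) (f3' (tA+tB)) _ (fun v => rfl) j,
      f3'_fiber (tA+tB) q (m+n) i hq hsum i.isLt,
      f3'_fiber (tA+tB) q (m+n) j hq hsum j.isLt]
    split_ifs <;> omega
  · intro v w x hw hx havw havx
    have hvw : v.1 ≠ w.1 := havw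
    have hvx : v.1 ≠ x.1 := havx
    have hw' := congrArg Fin.val hw
    have hx' := congrArg Fin.val hx
    simp only at hw' hx'
    apply posT'_inj m n tA tB hA hB
    rcases posT'_spec m n tA tB hA hB v with ⟨e1, r1⟩ | ⟨e1, r1⟩ <;>
      rcases posT'_spec m n tA tB hA hB w with ⟨e2, r2⟩ | ⟨e2, r2⟩ <;>
        rcases posT'_spec m n tA tB hA hB x with ⟨e3, r3⟩ | ⟨e3, r3⟩ <;>
          first
            | exact absurd (e1.trans e2.symm) hvw
            | exact absurd (e1.trans e3.symm) hvx
            | (unfold f3' at hw' hx'; split_ifs at hw' hx' <;> omega)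

def posP' (m n : ℕ) (v : Σ i : Fin 2, Fin (![m, n] i)) : ℕ :=
  if v.1 = 0 then (v.2 : ℕ) else m + (v.2 : ℕ)

def f2' (t2 k : ℕ) : ℕ := if k < 2*t2 then k/2 else t2 + (k - 2*t2)

lemma posP'_spec (m n : ℕ) (v : Σ i : Fin 2, Fin (![m, n] i)) :
    (v.1 = 0 ∧ posP' m n v < m) ∨
    (v.1 = 1 ∧ m ≤ posP' m n v ∧ posP' m n v < m + n) := by
  rcases fin2_cases v.1 with h | h
  · left
    have key : ![m, n] v.1 = m := by rw [h]; rfl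
    have hx : (v.2 : ℕ) < m := by have := v.2.isLt; omega
    refine ⟨h, ?_⟩
    rw [posP', if_pos h]; omega
  · right
    have key : ![m, n] v.1 = n := by rw [h]; rfl
    have hx : (v.2 : ℕ) < n := by have := v.2.isLt; omega
    refine ⟨h, ?_⟩
    rw [posP', if_neg (by rw [h]; decide)]; omega

lemma posP'_inj (m n : ℕ) (v w : Σ i : Fin 2, Fin (![m, n] i))
    (h : posP' m n v = posP' m n w) : v = w := by
  have hv := posP'_spec m n v
  have hw := posP'_spec m n w
  have hside : v.1 = w.1 := by
    rcases hv with ⟨h1, h2⟩ | ⟨h1, h2⟩ <;> rcases hw with ⟨h3, h4⟩ | ⟨h3, h4⟩ <;>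
      rw [h1, h3] <;> omega
  have hval : (v.2 : ℕ) = (w.2 : ℕ) := by
    rcases fin2_cases v.1 with h0 | h0
    · rw [posP', posP', if_pos h0, if_pos (hside ▸ h0)] at h
      omega
    · rw [posP', posP', if_neg (by rw [h0]; decide),
        if_neg (by rw [← hside, h0]; decide)] at h
      omega
  obtain ⟨i, x⟩ := v
  obtain ⟨j, y⟩ := w
  simp only at hside hval
  subst hside
  exact congrArg _ (Fin.ext hval)

lemma posP'_surj (m n : ℕ) (k : ℕ) (hk : k < m + n) : ∃ v, posP' m n v = k := by
  by_cases h1 : k < m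
  · exact ⟨⟨0, ⟨k, show k < m from h1⟩⟩, rfl⟩
  · refine ⟨⟨1, ⟨k - m, show k - m < n by omega⟩⟩, ?_⟩
    show m + (k - m) = k
    omega

lemma f2'_fiber (q N j : ℕ) (hq : N ≤ 2*q) (hj : j < q) :
    ((range N).filter (fun k => f2' (N - q) k = j)).card
      = if j < N - q then 2 else if j + (N - q) < N then 1 else 0 := by
  rcases lt_or_ge j (N - q) with h | h
  · rw [if_pos h]
    have he : (range N).filter (fun k => f2' (N - q) k = j) = Ico (2*j) (2*j+2) := by
      ext k
      rw [mem_filter, mem_range, mem_Ico, f2']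
      split_ifs <;> omega
    rw [he, Nat.card_Ico]; omega
  · rw [if_neg (by omega)]
    rcases lt_or_ge (j + (N - q)) N with h2 | h2
    · rw [if_pos h2]
      have he : (range N).filter (fun k => f2' (N - q) k = j) = {j + (N - q)} := by
        ext k
        rw [mem_filter, mem_range, mem_singleton, f2']
        split_ifs <;> omega
      rw [he, card_singleton]
    · rw [if_neg (by omega)]
      have he : (range N).filter (fun k => f2' (N - q) k = j) = ∅ := by
        ext k
        rw [mem_filter, mem_range]
        simp only [notMem_empty, iff_false, not_and, f2']
        intro hkN
        split_ifs <;> omega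
      rw [he, card_empty]

lemma pairs_coloring (m n q : ℕ) (hq : m + n ≤ 2*q) :
    IsEqTreeColoring (CompleteMultipartite 2 ![m, n]) q := by
  have hplt : ∀ v : Σ i : Fin 2, Fin (![m,n] i), posP' m n v < m + n := by
    intro v
    rcases posP'_spec m n v with ⟨_, h⟩ | ⟨_, h⟩ <;> omega
  have hflt : ∀ v : Σ i : Fin 2, Fin (![m,n] i),
      f2' (m + n - q) (posP' m n v) < q := by
    intro v
    have := hplt v
    unfold f2'; split_ifs <;> omega
  refine ⟨fun v => ⟨f2' (m + n - q) (posP' m n v), hflt v⟩, ?_, ?_⟩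
  · intro i j
    rw [fiber_card_eq q (posP' m n) (m+n) hplt (posP'_inj m n)
        (posP'_surj m n) (f2' (m + n - q)) _ (fun v => rfl) i,
      fiber_card_eq q (posP' m n) (m+n) hplt (posP'_inj m n)
        (posP'_surj m n) (f2' (m + n - q)) _ (fun v => rfl) j,
      f2'_fiber q (m+n) i hq i.isLt, f2'_fiber q (m+n) j hq j.isLt]
    have hi := i.isLt
    have hj := j.isLt
    split_ifs <;> omega
  · intro v w x hw hx havw havx
    have hvw : v.1 ≠ w.1 := havw
    have hvx : v.1 ≠ x.1 := havx
    have hw' := congrArg Fin.val hw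
    have hx' := congrArg Fin.val hx
    simp only at hw' hx'
    apply posP'_inj m n
    rcases posP'_spec m n v with ⟨e1, r1⟩ | ⟨e1, r1⟩ <;>
      rcases posP'_spec m n w with ⟨e2, r2⟩ | ⟨e2, r2⟩ <;>
        rcases posP'_spec m n x with ⟨e3, r3⟩ | ⟨e3, r3⟩ <;>
          first
            | exact absurd (e1.trans e2.symm) hvw
            | exact absurd (e1.trans e3.symm) hvx
            | (unfold f2' at hw' hx'; split_ifs at hw' hx' <;> omega)

set_option maxHeartbeats 2000000 in
lemma no_coloring (b c : ℕ) (hb : 1 ≤ b) (hc : 1 ≤ c) :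
    ¬ IsEqTreeColoring (CompleteMultipartite 2 ![3*b+1, 3*c+2]) (b+c+1) := by
  rintro ⟨C, hEq, hTree⟩
  have htot : ∑ i : Fin (b+c+1),
      (univ.filter (fun v => C v = i)).card = 3*(b+c+1) := by
    rw [← Finset.card_eq_sum_card_fiberwise (fun v _ => mem_univ (C v))]
    rw [Finset.card_univ]
    simp [Fintype.card_sigma, Fin.sum_univ_two]
    omega
  have key : ∀ i : Fin (b+c+1), (univ.filter (fun v => C v = i)).card = 3 := by
    intro i
    have hsplit : (univ.filter (fun v => C v = i)).card
        + ∑ j ∈ univ.erase i, (univ.filter (fun v => C v = j)).card = 3*(b+c+1) := by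
      rw [← htot]
      exact Finset.add_sum_erase univ (fun j => (univ.filter (fun v => C v = j)).card) (mem_univ i)
    have hcard : (univ.erase i).card = (b+c+1) - 1 := by
      rw [Finset.card_erase_of_mem (mem_univ i), Finset.card_univ, Fintype.card_fin]
    by_contra hne
    rcases lt_or_ge ((univ.filter (fun v => C v = i)).card) 3 with hlt | hge
    · have hrest : ∑ j ∈ univ.erase i, (univ.filter (fun v => C v = j)).card
          ≤ (univ.erase i).card • 3 :=
        Finset.sum_le_card_nsmul _ _ 3 (fun j _ => by have := hEq j i; omega)
      simp only [smul_eq_mul, hcard] at hrest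
      omega
    · have hrest : (univ.erase i).card • 3
          ≤ ∑ j ∈ univ.erase i, (univ.filter (fun v => C v = j)).card :=
        Finset.card_nsmul_le_sum _ _ 3 (fun j _ => by have := hEq i j; omega)
      simp only [smul_eq_mul, hcard] at hrest
      omega
  have hAB : ∀ i : Fin (b+c+1),
      (univ.filter (fun v => C v = i ∧ v.1 = 0)).card
        + (univ.filter (fun v => C v = i ∧ ¬ v.1 = 0)).card = 3 := by
    intro i
    conv_rhs => rw [← key i]
    have h := Finset.card_filter_add_card_filter_not
      (s := univ.filter (fun v => C v = i)) (p := fun v => v.1 = 0)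
    simpa [Finset.filter_filter] using h
  have hdich : ∀ i : Fin (b+c+1),
      (univ.filter (fun v => C v = i ∧ v.1 = 0)).card = 0 ∨
      (univ.filter (fun v => C v = i ∧ v.1 = 0)).card = 3 := by
    intro i
    by_contra hcon
    push_neg at hcon
    obtain ⟨h0, h3⟩ := hcon
    have hi := hAB i
    -- both classes nonempty; one has ≥ 2
    rcases lt_or_ge 1 ((univ.filter (fun v => C v = i ∧ v.1 = 0)).card) with h2A | h1A
    · -- two in side A, one in side B
      obtain ⟨w, hwmem, x, hxmem, hwx⟩ := Finset.one_lt_card.mp h2A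
      have hBne : 0 < (univ.filter (fun v => C v = i ∧ ¬ v.1 = 0)).card := by omega
      obtain ⟨v, hvmem⟩ := Finset.card_pos.mp hBne
      simp only [mem_filter, mem_univ, true_and] at hwmem hxmem hvmem
      have := hTree v w x (hwmem.1.trans hvmem.1.symm) (hxmem.1.trans hvmem.1.symm)
        (show v.1 ≠ w.1 by rw [hwmem.2]; exact hvmem.2)
        (show v.1 ≠ x.1 by rw [hxmem.2]; exact hvmem.2)
      exact hwx this
    · -- at most one in A, so side B has ≥ 2, A nonempty
      have h2B : 1 < (univ.filter (fun v => C v = i ∧ ¬ v.1 = 0)).card := by omega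
      obtain ⟨w, hwmem, x, hxmem, hwx⟩ := Finset.one_lt_card.mp h2B
      have hAne : 0 < (univ.filter (fun v => C v = i ∧ v.1 = 0)).card := by omega
      obtain ⟨v, hvmem⟩ := Finset.card_pos.mp hAne
      simp only [mem_filter, mem_univ, true_and] at hwmem hxmem hvmem
      have := hTree v w x (hwmem.1.trans hvmem.1.symm) (hxmem.1.trans hvmem.1.symm)
        (show v.1 ≠ w.1 by rw [hvmem.2]; exact fun h => hwmem.2 h.symm)
        (show v.1 ≠ x.1 by rw [hvmem.2]; exact fun h => hxmem.2 h.symm)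
      exact hwx this
  have hcardA : (univ.filter
      (fun v : Σ i : Fin 2, Fin (![3*b+1, 3*c+2] i) => v.1 = 0)).card = 3*b+1 := by
    have hmap : univ.filter (fun v : Σ i : Fin 2, Fin (![3*b+1, 3*c+2] i) => v.1 = 0)
        = (univ : Finset (Fin (![3*b+1, 3*c+2] 0))).map
          (⟨fun x => (⟨0, x⟩ : Σ i : Fin 2, Fin (![3*b+1, 3*c+2] i)),
            fun a b h => by simp at h; exact eq_of_heq h⟩ :
            Fin (![3*b+1, 3*c+2] 0) ↪ (Σ i : Fin 2, Fin (![3*b+1, 3*c+2] i))) := by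
      ext v
      simp only [mem_filter, mem_univ, true_and, mem_map, Function.Embedding.coeFn_mk]
      constructor
      · intro h
        obtain ⟨i, x⟩ := v
        simp only at h
        subst h
        exact ⟨x, rfl⟩
      · rintro ⟨a, rfl⟩
        rfl
    rw [hmap, Finset.card_map, Finset.card_univ, Fintype.card_fin]
    rfl
  have hsumA : ∑ i : Fin (b+c+1),
      (univ.filter (fun v => C v = i ∧ v.1 = 0)).card = 3*b+1 := by
    conv_rhs => rw [← hcardA]
    rw [Finset.card_eq_sum_card_fiberwise
      (f := C) (t := univ) (fun v _ => mem_univ (C v))]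
    apply Finset.sum_congr rfl
    intro i _
    congr 1
    rw [Finset.filter_comm, Finset.filter_filter]
  have hdvd : (3:ℕ) ∣ 3*b+1 := by
    rw [← hsumA]
    apply Finset.dvd_sum
    intro i _
    rcases hdich i with h | h <;> rw [h]
    · exact dvd_zero 3
  omega

theorem stmt3 (b c : ℕ) (hb : 1 ≤ b) (hc : 1 ≤ c) :
    IsLeast {p : ℕ | ∀ q, p ≤ q →
        IsEqTreeColoring (CompleteMultipartite 2 ![3 * b + 1, 3 * c + 2]) q}
      (b + c + 2) := by
  constructor
  · intro q hq
    by_cases h2 : (3*b+1) + (3*c+2) ≤ 2*q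
    · exact pairs_coloring (3*b+1) (3*c+2) q h2
    · exact triples_coloring (3*b+1) (3*c+2) q
        (min (3*b+3*c+3 - 2*q) b) ((3*b+3*c+3 - 2*q) - min (3*b+3*c+3 - 2*q) b)
        (by omega) (by omega) (by omega) (by omega)
  · intro p hp
    by_contra h
    push_neg at h
    exact no_coloring b c hb hc (hp (b+c+1) (by omega))
end

section
/- Let m = 3b+2 and n = 3c+2 for positive integers b and c. Then the strong equitable vertex 1-arboricity of K_{m,n} equals b+c+2. -/
open Finset

section AuxTree

def eFun (m n a a' : ℕ) (hm : 3*a ≤ m) (hn : 3*a' ≤ n) :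
    (Σ i : Fin 2, Fin (![m, n] i)) → Fin (m + n)
  | ⟨⟨0,_⟩, j⟩ => if j.val < 3*a then ⟨j.val, by have : j.val < m := j.isLt; omega⟩
      else ⟨j.val + 3*a', by have : j.val < m := j.isLt; omega⟩
  | ⟨⟨1,_⟩, j⟩ => if j.val < 3*a' then ⟨j.val + 3*a, by have : j.val < n := j.isLt; omega⟩
      else ⟨j.val + m, by have : j.val < n := j.isLt; omega⟩

lemma eFun_inj (m n a a' : ℕ) (hm : 3*a ≤ m) (hn : 3*a' ≤ n) :
    Function.Injective (eFun m n a a' hm hn) := by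
  rintro ⟨⟨i, hi⟩, j⟩ ⟨⟨k, hk⟩, l⟩ h
  interval_cases i <;> interval_cases k
  · have hj : j.val < m := j.isLt; have hl : l.val < m := l.isLt
    simp only [eFun] at h; split_ifs at h <;> simp only [Fin.mk.injEq] at h <;>
      exact Sigma.ext rfl (heq_of_eq (Fin.ext (show j.val = l.val by omega)))
  · have hj : j.val < m := j.isLt; have hl : l.val < n := l.isLt
    exfalso; simp only [eFun] at h; split_ifs at h <;>
      simp only [Fin.mk.injEq] at h <;> omega
  · have hj : j.val < n := j.isLt; have hl : l.val < m := l.isLt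
    exfalso; simp only [eFun] at h; split_ifs at h <;>
      simp only [Fin.mk.injEq] at h <;> omega
  · have hj : j.val < n := j.isLt; have hl : l.val < n := l.isLt
    simp only [eFun] at h; split_ifs at h <;> simp only [Fin.mk.injEq] at h <;>
      exact Sigma.ext rfl (heq_of_eq (Fin.ext (show j.val = l.val by omega)))

lemma eFun_bij (m n a a' : ℕ) (hm : 3*a ≤ m) (hn : 3*a' ≤ n) :
    Function.Bijective (eFun m n a a' hm hn) := by
  rw [Fintype.bijective_iff_injective_and_card]
  refine ⟨eFun_inj m n a a' hm hn, ?_⟩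
  simp [Fintype.card_sigma, Fin.sum_univ_two]

lemma eFun_side0 (m n a a' : ℕ) (hm : 3*a ≤ m) (hn : 3*a' ≤ n)
    (u : Σ i : Fin 2, Fin (![m, n] i)) (h : (eFun m n a a' hm hn u).val < 3*a) :
    u.1 = 0 := by
  obtain ⟨⟨i, hi⟩, j⟩ := u
  interval_cases i
  · rfl
  · exfalso; have hj : j.val < n := j.isLt
    simp only [eFun] at h; split_ifs at h <;> simp at h <;> omega

lemma eFun_side1 (m n a a' : ℕ) (hm : 3*a ≤ m) (hn : 3*a' ≤ n)
    (u : Σ i : Fin 2, Fin (![m, n] i)) (h0 : 3*a ≤ (eFun m n a a' hm hn u).val)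
    (h1 : (eFun m n a a' hm hn u).val < 3*(a+a')) :
    u.1 = 1 := by
  obtain ⟨⟨i, hi⟩, j⟩ := u
  interval_cases i
  · exfalso; have hj : j.val < m := j.isLt
    simp only [eFun] at h0 h1; split_ifs at h0 h1 <;> simp at h0 h1 <;> omega
  · rfl

lemma card_filter_comp {α β : Type*} [Fintype α] [Fintype β] [DecidableEq β]
    (e : α → β) (he : Function.Bijective e) (p : β → Prop) [DecidablePred p] :
    (univ.filter fun v => p (e v)).card = (univ.filter p).card := by
  apply Finset.card_bij (fun v _ => e v)
  · intro v hv; simp only [mem_filter, mem_univ, true_and] at hv ⊢; exact hv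
  · intro v _ w _ h; exact he.1 h
  · intro x hx
    obtain ⟨v, rfl⟩ := he.2 x
    exact ⟨v, by simpa using (mem_filter.mp hx).2, rfl⟩

def gBig (N q t : ℕ) (hN : N = 2*q + t) (ht : 3*t ≤ N) : Fin N → Fin q := fun x =>
  if h : x.val < 3*t then ⟨x.val / 3, by omega⟩
  else ⟨t + (x.val - 3*t)/2, by have := x.isLt; omega⟩

lemma gBig_eq_iff (N q t : ℕ) (hN : N = 2*q + t) (ht : 3*t ≤ N) (x : Fin N) (γ : Fin q) :
    gBig N q t hN ht x = γ ↔
      (x.val < 3*t ∧ x.val / 3 = γ.val) ∨ (¬ x.val < 3*t ∧ t + (x.val - 3*t)/2 = γ.val) := by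
  unfold gBig
  split_ifs with h <;> simp [Fin.ext_iff, h]

lemma gBig_card (N q t : ℕ) (hN : N = 2*q + t) (ht : 3*t ≤ N) (γ : Fin q) :
    (univ.filter fun x : Fin N => gBig N q t hN ht x = γ).card
      = if γ.val < t then 3 else 2 := by
  have hγ := γ.isLt
  split_ifs with hγt
  · have hset : (univ.filter fun x : Fin N => gBig N q t hN ht x = γ)
        = {(⟨3*γ.val, by omega⟩ : Fin N), ⟨3*γ.val+1, by omega⟩, ⟨3*γ.val+2, by omega⟩} := by
      ext x
      rw [mem_filter, gBig_eq_iff, mem_insert, mem_insert, mem_singleton]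
      constructor
      · rintro ⟨-, (⟨h1, h2⟩ | ⟨h1, h2⟩)⟩
        · have hx : x.val = 3*γ.val ∨ x.val = 3*γ.val+1 ∨ x.val = 3*γ.val+2 := by omega
          rcases hx with h | h | h
          · exact Or.inl (Fin.ext h)
          · exact Or.inr (Or.inl (Fin.ext h))
          · exact Or.inr (Or.inr (Fin.ext h))
        · exact absurd h2 (by omega)
      · rintro (rfl | rfl | rfl) <;>
          exact ⟨mem_univ _, Or.inl ⟨by simp only [Fin.val_mk]; omega, by simp only [Fin.val_mk]; omega⟩⟩
    rw [hset]
    rw [card_insert_of_notMem (by simp [Fin.ext_iff]),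
      card_insert_of_notMem (by simp [Fin.ext_iff]), card_singleton]
  · have hset : (univ.filter fun x : Fin N => gBig N q t hN ht x = γ)
        = {(⟨3*t + 2*(γ.val - t), by omega⟩ : Fin N), ⟨3*t + 2*(γ.val - t) + 1, by omega⟩} := by
      ext x
      rw [mem_filter, gBig_eq_iff, mem_insert, mem_singleton]
      constructor
      · rintro ⟨-, (⟨h1, h2⟩ | ⟨h1, h2⟩)⟩
        · exact absurd h2 (by omega)
        · have hx : x.val = 3*t + 2*(γ.val-t) ∨ x.val = 3*t + 2*(γ.val-t)+1 := by omega
          rcases hx with h | h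
          · exact Or.inl (Fin.ext h)
          · exact Or.inr (Fin.ext h)
      · rintro (rfl | rfl) <;>
          exact ⟨mem_univ _, Or.inr ⟨by simp only [Fin.val_mk]; omega, by simp only [Fin.val_mk]; omega⟩⟩
    rw [hset, card_insert_of_notMem (by simp [Fin.ext_iff]), card_singleton]

def gSmall (N q : ℕ) (h : N ≤ 2*q) : Fin N → Fin q := fun x =>
  if hx : x.val < q then ⟨x.val, hx⟩ else ⟨x.val - q, by have := x.isLt; omega⟩

lemma gSmall_eq_iff (N q : ℕ) (h : N ≤ 2*q) (x : Fin N) (γ : Fin q) :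
    gSmall N q h x = γ ↔ x.val = γ.val ∨ x.val = γ.val + q := by
  have hx := x.isLt
  have hγ := γ.isLt
  unfold gSmall
  split_ifs with hq <;> simp [Fin.ext_iff] <;> omega

lemma gSmall_card (N q : ℕ) (h : N ≤ 2*q) (γ : Fin q) :
    (univ.filter fun x : Fin N => gSmall N q h x = γ).card
      = if γ.val + q < N then 2 else if γ.val < N then 1 else 0 := by
  have hγ := γ.isLt
  split_ifs with h1 h2
  · have hset : (univ.filter fun x : Fin N => gSmall N q h x = γ)
        = {(⟨γ.val, by omega⟩ : Fin N), ⟨γ.val + q, by omega⟩} := by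
      ext x
      rw [mem_filter, gSmall_eq_iff, mem_insert, mem_singleton]
      constructor
      · rintro ⟨-, (h' | h')⟩
        · exact Or.inl (Fin.ext h')
        · exact Or.inr (Fin.ext h')
      · rintro (rfl | rfl)
        · exact ⟨mem_univ _, Or.inl rfl⟩
        · exact ⟨mem_univ _, Or.inr rfl⟩
    rw [hset, card_insert_of_notMem (by simp [Fin.ext_iff]; omega), card_singleton]
  · have hset : (univ.filter fun x : Fin N => gSmall N q h x = γ)
        = {(⟨γ.val, by omega⟩ : Fin N)} := by
      ext x
      have hx := x.isLt
      rw [mem_filter, gSmall_eq_iff, mem_singleton]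
      constructor
      · rintro ⟨-, (h' | h')⟩
        · exact Fin.ext h'
        · exact absurd h' (by omega)
      · rintro rfl; exact ⟨mem_univ _, Or.inl rfl⟩
    rw [hset, card_singleton]
  · have hset : (univ.filter fun x : Fin N => gSmall N q h x = γ) = ∅ := by
      ext x
      have hx := x.isLt
      rw [mem_filter, gSmall_eq_iff]
      simp only [notMem_empty, iff_false, not_and, mem_univ, true_and, not_or]
      omega
    rw [hset, card_empty]

end AuxTree
lemma small_case (m n q : ℕ) (h : m + n ≤ 2*q) :
    IsEqTreeColoring (CompleteMultipartite 2 ![m, n]) q := by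
  have hm0 : 3*0 ≤ m := by omega
  have hn0 : 3*0 ≤ n := by omega
  refine ⟨fun v => gSmall (m+n) q h (eFun m n 0 0 hm0 hn0 v), ?_, ?_⟩
  · intro i j
    have hi := card_filter_comp (eFun m n 0 0 hm0 hn0) (eFun_bij m n 0 0 hm0 hn0)
      (fun x => gSmall (m+n) q h x = i)
    have hj := card_filter_comp (eFun m n 0 0 hm0 hn0) (eFun_bij m n 0 0 hm0 hn0)
      (fun x => gSmall (m+n) q h x = j)
    show (univ.filter fun v => gSmall (m+n) q h (eFun m n 0 0 hm0 hn0 v) = i).card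
      ≤ (univ.filter fun v => gSmall (m+n) q h (eFun m n 0 0 hm0 hn0 v) = j).card + 1
    rw [hi, hj, gSmall_card, gSmall_card]
    have := i.isLt; have := j.isLt
    split_ifs <;> omega
  · intro v w x hw hx hvw hvx
    by_contra hne
    have hv' := (gSmall_eq_iff (m+n) q h (eFun m n 0 0 hm0 hn0 v)
      (gSmall (m+n) q h (eFun m n 0 0 hm0 hn0 v))).mp rfl
    have hw' := (gSmall_eq_iff (m+n) q h (eFun m n 0 0 hm0 hn0 w)
      (gSmall (m+n) q h (eFun m n 0 0 hm0 hn0 v))).mp hw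
    have hx' := (gSmall_eq_iff (m+n) q h (eFun m n 0 0 hm0 hn0 x)
      (gSmall (m+n) q h (eFun m n 0 0 hm0 hn0 v))).mp hx
    have d1 : (eFun m n 0 0 hm0 hn0 v).val ≠ (eFun m n 0 0 hm0 hn0 w).val :=
      fun hh => hvw.ne (eFun_inj m n 0 0 hm0 hn0 (Fin.ext hh))
    have d2 : (eFun m n 0 0 hm0 hn0 v).val ≠ (eFun m n 0 0 hm0 hn0 x).val :=
      fun hh => hvx.ne (eFun_inj m n 0 0 hm0 hn0 (Fin.ext hh))
    have d3 : (eFun m n 0 0 hm0 hn0 w).val ≠ (eFun m n 0 0 hm0 hn0 x).val :=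
      fun hh => hne (eFun_inj m n 0 0 hm0 hn0 (Fin.ext hh))
    omega

lemma big_case (m n q a a' : ℕ) (hm : 3*a ≤ m) (hn : 3*a' ≤ n)
    (hN : m + n = 2*q + (a+a')) :
    IsEqTreeColoring (CompleteMultipartite 2 ![m, n]) q := by
  have ht : 3*(a+a') ≤ m + n := by omega
  refine ⟨fun v => gBig (m+n) q (a+a') hN ht (eFun m n a a' hm hn v), ?_, ?_⟩
  · intro i j
    have hi := card_filter_comp (eFun m n a a' hm hn) (eFun_bij m n a a' hm hn)
      (fun x => gBig (m+n) q (a+a') hN ht x = i)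
    have hj := card_filter_comp (eFun m n a a' hm hn) (eFun_bij m n a a' hm hn)
      (fun x => gBig (m+n) q (a+a') hN ht x = j)
    show (univ.filter fun v => gBig (m+n) q (a+a') hN ht (eFun m n a a' hm hn v) = i).card
      ≤ (univ.filter fun v => gBig (m+n) q (a+a') hN ht (eFun m n a a' hm hn v) = j).card + 1
    rw [hi, hj, gBig_card, gBig_card]
    split_ifs <;> omega
  · intro v w x hw hx hvw hvx
    by_cases hlt : (gBig (m+n) q (a+a') hN ht (eFun m n a a' hm hn v)).val < a + a'
    · exfalso
      have key : ∀ y : Fin (m+n),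
          gBig (m+n) q (a+a') hN ht y = gBig (m+n) q (a+a') hN ht (eFun m n a a' hm hn v) →
          3*(gBig (m+n) q (a+a') hN ht (eFun m n a a' hm hn v)).val ≤ y.val ∧
          y.val < 3*(gBig (m+n) q (a+a') hN ht (eFun m n a a' hm hn v)).val + 3 := by
        intro y hy
        rcases (gBig_eq_iff (m+n) q (a+a') hN ht y _).mp hy with ⟨h1, h2⟩ | ⟨h1, h2⟩ <;> omega
      have kv := key _ rfl
      have kw := key _ hw
      by_cases hlta : (gBig (m+n) q (a+a') hN ht (eFun m n a a' hm hn v)).val < a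
      · have s1 : v.1 = 0 := eFun_side0 m n a a' hm hn v (by omega)
        have s2 : w.1 = 0 := eFun_side0 m n a a' hm hn w (by omega)
        exact hvw (s1.trans s2.symm)
      · have s1 : v.1 = 1 := eFun_side1 m n a a' hm hn v (by omega) (by omega)
        have s2 : w.1 = 1 := eFun_side1 m n a a' hm hn w (by omega) (by omega)
        exact hvw (s1.trans s2.symm)
    · by_contra hne
      have key : ∀ y : Fin (m+n),
          gBig (m+n) q (a+a') hN ht y = gBig (m+n) q (a+a') hN ht (eFun m n a a' hm hn v) →
          y.val = 3*(a+a') + 2*((gBig (m+n) q (a+a') hN ht (eFun m n a a' hm hn v)).val - (a+a')) ∨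
          y.val = 3*(a+a') + 2*((gBig (m+n) q (a+a') hN ht (eFun m n a a' hm hn v)).val - (a+a')) + 1 := by
        intro y hy
        rcases (gBig_eq_iff (m+n) q (a+a') hN ht y _).mp hy with ⟨h1, h2⟩ | ⟨h1, h2⟩ <;> omega
      have kv := key _ rfl
      have kw := key _ hw
      have kx := key _ hx
      have d1 : (eFun m n a a' hm hn v).val ≠ (eFun m n a a' hm hn w).val :=
        fun hh => hvw.ne (eFun_inj m n a a' hm hn (Fin.ext hh))
      have d2 : (eFun m n a a' hm hn v).val ≠ (eFun m n a a' hm hn x).val :=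
        fun hh => hvx.ne (eFun_inj m n a a' hm hn (Fin.ext hh))
      have d3 : (eFun m n a a' hm hn w).val ≠ (eFun m n a a' hm hn x).val :=
        fun hh => hne (eFun_inj m n a a' hm hn (Fin.ext hh))
      omega
lemma side_card0 (m n : ℕ) :
    (univ.filter fun v : Σ i : Fin 2, Fin (![m,n] i) => v.1 = 0).card = m := by
  have hset : (univ.filter fun v : Σ i : Fin 2, Fin (![m,n] i) => v.1 = 0)
      = ({(0 : Fin 2)} : Finset (Fin 2)).sigma (fun i => univ) := by
    ext ⟨i, j⟩
    simp [Finset.mem_sigma]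
  rw [hset, Finset.card_sigma]
  simp

lemma side_card1 (m n : ℕ) :
    (univ.filter fun v : Σ i : Fin 2, Fin (![m,n] i) => v.1 = 1).card = n := by
  have hset : (univ.filter fun v : Σ i : Fin 2, Fin (![m,n] i) => v.1 = 1)
      = ({(1 : Fin 2)} : Finset (Fin 2)).sigma (fun i => univ) := by
    ext ⟨i, j⟩
    simp [Finset.mem_sigma]
  rw [hset, Finset.card_sigma]
  simp

lemma arith_contra (q b c : ℕ) (hb : 1 ≤ b) (hc : 1 ≤ c) (hq : q = b+c+1)
    (f0 f1 : Fin q → ℕ)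
    (h34 : ∀ γ, 3 ≤ f0 γ + f1 γ ∧ f0 γ + f1 γ ≤ 4)
    (hpure : ∀ γ, f0 γ = 0 ∨ f1 γ = 0)
    (h0 : ∑ γ, f0 γ = 3*b+2) (h1 : ∑ γ, f1 γ = 3*c+2) : False := by
  have hS : ∀ (f g : Fin q → ℕ), (∀ γ, 3 ≤ f γ + g γ ∧ f γ + g γ ≤ 4) →
      (∀ γ, f γ = 0 ∨ g γ = 0) → ∀ d : ℕ, (∑ γ, f γ = 3*d+2) →
      2 ≤ (univ.filter fun γ => f γ = 4).card := by
    intro f g hfg hp d hsum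
    have hsplit := Finset.sum_filter_add_sum_filter_not univ (fun γ => f γ = 4) f
    have hA : ∑ γ ∈ univ.filter (fun γ => f γ = 4), f γ
        = 4 * (univ.filter fun γ => f γ = 4).card := by
      rw [Finset.sum_congr rfl (fun γ hγ => (mem_filter.mp hγ).2), sum_const, smul_eq_mul,
        mul_comm]
    have hB : 3 ∣ ∑ γ ∈ univ.filter (fun γ => ¬ f γ = 4), f γ := by
      apply Finset.dvd_sum
      intro γ hγ
      have h4 := (mem_filter.mp hγ).2
      rcases hp γ with h' | h'
      · simp [h']
      · have h5 := hfg γ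
        have h6 : f γ = 3 := by omega
        simp [h6]
    obtain ⟨k, hk⟩ := hB
    omega
  have h2b := hS f0 f1 h34 hpure b h0
  have h2c := hS f1 f0 (fun γ => by have := h34 γ; omega) (fun γ => (hpure γ).symm) c h1
  have hdis : Disjoint (univ.filter fun γ : Fin q => f0 γ = 4)
      (univ.filter fun γ : Fin q => f1 γ = 4) := by
    rw [Finset.disjoint_left]
    intro γ hγ1 hγ2
    have := h34 γ
    simp only [mem_filter] at hγ1 hγ2
    omega
  have hcardU : 4 ≤ (univ.filter fun γ : Fin q => f0 γ = 4 ∨ f1 γ = 4).card := by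
    rw [filter_or, card_union_of_disjoint hdis]
    omega
  have hsplit2 := Finset.sum_filter_add_sum_filter_not univ
    (fun γ : Fin q => f0 γ = 4 ∨ f1 γ = 4) (fun γ => f0 γ + f1 γ)
  have hA2 : 4 * (univ.filter fun γ : Fin q => f0 γ = 4 ∨ f1 γ = 4).card
      ≤ ∑ γ ∈ univ.filter (fun γ : Fin q => f0 γ = 4 ∨ f1 γ = 4), (f0 γ + f1 γ) := by
    calc 4 * (univ.filter fun γ : Fin q => f0 γ = 4 ∨ f1 γ = 4).card
        = ∑ _γ ∈ univ.filter (fun γ : Fin q => f0 γ = 4 ∨ f1 γ = 4), 4 := by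
          rw [sum_const, smul_eq_mul, mul_comm]
      _ ≤ _ := sum_le_sum (fun γ hγ => by
          rcases (mem_filter.mp hγ).2 with h' | h' <;> omega)
  have hB2 : 3 * (univ.filter fun γ : Fin q => ¬(f0 γ = 4 ∨ f1 γ = 4)).card
      ≤ ∑ γ ∈ univ.filter (fun γ : Fin q => ¬(f0 γ = 4 ∨ f1 γ = 4)), (f0 γ + f1 γ) := by
    calc 3 * (univ.filter fun γ : Fin q => ¬(f0 γ = 4 ∨ f1 γ = 4)).card
        = ∑ _γ ∈ univ.filter (fun γ : Fin q => ¬(f0 γ = 4 ∨ f1 γ = 4)), 3 := by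
          rw [sum_const, smul_eq_mul, mul_comm]
      _ ≤ _ := sum_le_sum (fun γ hγ => (h34 γ).1)
  have hcards := Finset.card_filter_add_card_filter_not
    (s := (univ : Finset (Fin q))) (p := fun γ : Fin q => f0 γ = 4 ∨ f1 γ = 4)
  have hq' : (univ : Finset (Fin q)).card = q := by simp
  have htot : ∑ γ : Fin q, (f0 γ + f1 γ) = 3*b+3*c+4 := by
    rw [Finset.sum_add_distrib, h0, h1]; ring
  omega
lemma not_case (b c : ℕ) (hb : 1 ≤ b) (hc : 1 ≤ c) :
    ¬ IsEqTreeColoring (CompleteMultipartite 2 ![3*b+2, 3*c+2]) (b+c+1) := by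
  rintro ⟨C, hEq, hTree⟩
  have hcardV : (univ : Finset (Σ i : Fin 2, Fin (![3*b+2, 3*c+2] i))).card
      = (3*b+2)+(3*c+2) := by
    simp [card_univ, Fintype.card_sigma, Fin.sum_univ_two]
  have hsum : (univ : Finset (Σ i : Fin 2, Fin (![3*b+2, 3*c+2] i))).card
      = ∑ γ : Fin (b+c+1), (univ.filter fun v => C v = γ).card :=
    card_eq_sum_card_fiberwise (fun v _ => mem_univ _)
  -- every class has size 3 or 4
  have hcards : ∀ γ : Fin (b+c+1), 3 ≤ (univ.filter fun v => C v = γ).card ∧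
      (univ.filter fun v => C v = γ).card ≤ 4 := by
    intro γ
    have hle : ∑ δ : Fin (b+c+1), (univ.filter fun v => C v = δ).card
        ≤ (b+c+1) * ((univ.filter fun v => C v = γ).card + 1) := by
      calc ∑ δ : Fin (b+c+1), (univ.filter fun v => C v = δ).card
          ≤ ∑ _δ : Fin (b+c+1), ((univ.filter fun v => C v = γ).card + 1) :=
            sum_le_sum fun δ _ => hEq δ γ
        _ = (b+c+1) * ((univ.filter fun v => C v = γ).card + 1) := by
            rw [sum_const, card_univ, Fintype.card_fin, smul_eq_mul]
    have hge : (b+c+1) * (univ.filter fun v => C v = γ).card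
        ≤ (∑ δ : Fin (b+c+1), (univ.filter fun v => C v = δ).card) + (b+c+1) := by
      calc (b+c+1) * (univ.filter fun v => C v = γ).card
          = ∑ _δ : Fin (b+c+1), (univ.filter fun v => C v = γ).card := by
            rw [sum_const, card_univ, Fintype.card_fin, smul_eq_mul]
        _ ≤ ∑ δ : Fin (b+c+1), ((univ.filter fun v => C v = δ).card + 1) :=
            sum_le_sum fun δ _ => hEq γ δ
        _ = (∑ δ : Fin (b+c+1), (univ.filter fun v => C v = δ).card) + (b+c+1) := by
            rw [sum_add_distrib, sum_const, card_univ, Fintype.card_fin, smul_eq_mul, mul_one]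
    constructor
    · by_contra hcon
      push_neg at hcon
      have hmul : (b+c+1) * ((univ.filter fun v => C v = γ).card + 1) ≤ (b+c+1) * 3 :=
        Nat.mul_le_mul_left _ (by omega)
      omega
    · by_contra hcon
      push_neg at hcon
      have hmul : (b+c+1) * 5 ≤ (b+c+1) * (univ.filter fun v => C v = γ).card :=
        Nat.mul_le_mul_left _ (by omega)
      omega
  -- split each class by side
  have hadd : ∀ γ : Fin (b+c+1),
      (univ.filter fun v => C v = γ ∧ v.1 = 0).card
        + (univ.filter fun v => C v = γ ∧ v.1 = 1).card
      = (univ.filter fun v => C v = γ).card := by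
    intro γ
    have hsplit := Finset.card_filter_add_card_filter_not
      (s := univ.filter fun v : Σ i : Fin 2, Fin (![3*b+2, 3*c+2] i) => C v = γ)
      (p := fun v => v.1 = 0)
    rw [filter_filter, filter_filter] at hsplit
    have hrw : (univ.filter fun v : Σ i : Fin 2, Fin (![3*b+2, 3*c+2] i) =>
        C v = γ ∧ ¬ v.1 = 0) = univ.filter (fun v => C v = γ ∧ v.1 = 1) := by
      apply filter_congr
      intro v _
      have : (¬ v.1 = 0) ↔ v.1 = 1 := by
        rcases v with ⟨i, j⟩
        fin_cases i <;> simp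
      rw [this]
    rw [hrw] at hsplit
    exact hsplit
  -- purity
  have hpure : ∀ γ : Fin (b+c+1), (univ.filter fun v => C v = γ ∧ v.1 = 0).card = 0
      ∨ (univ.filter fun v => C v = γ ∧ v.1 = 1).card = 0 := by
    intro γ
    by_contra hcon
    push_neg at hcon
    obtain ⟨hc0, hc1⟩ := hcon
    have h01 := hadd γ
    have h3 := (hcards γ).1
    rcases Nat.lt_or_ge (univ.filter fun v => C v = γ ∧ v.1 = 0).card 2 with hlt | hge
    · have hge1 : 1 < (univ.filter fun v => C v = γ ∧ v.1 = 1).card := by omega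
      obtain ⟨w, hwmem, x, hxmem, hwx⟩ := Finset.one_lt_card.mp hge1
      obtain ⟨v, hvmem⟩ := Finset.card_pos.mp (Nat.pos_of_ne_zero hc0)
      simp only [mem_filter, mem_univ, true_and] at hwmem hxmem hvmem
      exact hwx (hTree v w x (hwmem.1.trans hvmem.1.symm) (hxmem.1.trans hvmem.1.symm)
        (show v.1 ≠ w.1 by rw [hvmem.2, hwmem.2]; decide)
        (show v.1 ≠ x.1 by rw [hvmem.2, hxmem.2]; decide))
    · obtain ⟨w, hwmem, x, hxmem, hwx⟩ := Finset.one_lt_card.mp (show 1 <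
        (univ.filter fun v => C v = γ ∧ v.1 = 0).card by omega)
      obtain ⟨v, hvmem⟩ := Finset.card_pos.mp (Nat.pos_of_ne_zero hc1)
      simp only [mem_filter, mem_univ, true_and] at hwmem hxmem hvmem
      exact hwx (hTree v w x (hwmem.1.trans hvmem.1.symm) (hxmem.1.trans hvmem.1.symm)
        (show v.1 ≠ w.1 by rw [hvmem.2, hwmem.2]; decide)
        (show v.1 ≠ x.1 by rw [hvmem.2, hxmem.2]; decide))
  -- side sums
  have hfib0 := card_eq_sum_card_fiberwise
    (s := univ.filter fun v : Σ i : Fin 2, Fin (![3*b+2, 3*c+2] i) => v.1 = 0)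
    (t := (univ : Finset (Fin (b+c+1)))) (f := C) (fun v _ => mem_univ _)
  rw [side_card0] at hfib0
  have h0 : ∑ γ : Fin (b+c+1), (univ.filter fun v => C v = γ ∧ v.1 = 0).card = 3*b+2 := by
    refine (sum_congr rfl fun γ _ => ?_).trans hfib0.symm
    rw [filter_filter]
    congr 1
    apply filter_congr
    intro v _
    rw [and_comm]
  have hfib1 := card_eq_sum_card_fiberwise
    (s := univ.filter fun v : Σ i : Fin 2, Fin (![3*b+2, 3*c+2] i) => v.1 = 1)
    (t := (univ : Finset (Fin (b+c+1)))) (f := C) (fun v _ => mem_univ _)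
  rw [side_card1] at hfib1
  have h1 : ∑ γ : Fin (b+c+1), (univ.filter fun v => C v = γ ∧ v.1 = 1).card = 3*c+2 := by
    refine (sum_congr rfl fun γ _ => ?_).trans hfib1.symm
    rw [filter_filter]
    congr 1
    apply filter_congr
    intro v _
    rw [and_comm]
  exact arith_contra (b+c+1) b c hb hc rfl
    (fun γ => (univ.filter fun v => C v = γ ∧ v.1 = 0).card)
    (fun γ => (univ.filter fun v => C v = γ ∧ v.1 = 1).card)
    (fun γ => by rw [hadd γ]; exact hcards γ)
    hpure h0 h1

theorem stmt4 (b c : ℕ) (hb : 1 ≤ b) (hc : 1 ≤ c) :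
    IsLeast {p : ℕ | ∀ q, p ≤ q →
        IsEqTreeColoring (CompleteMultipartite 2 ![3 * b + 2, 3 * c + 2]) q}
      (b + c + 2) := by
  constructor
  · intro q hq
    by_cases hsm : (3 * b + 2) + (3 * c + 2) ≤ 2*q
    · exact small_case (3 * b + 2) (3 * c + 2) q hsm
    · push_neg at hsm
      exact big_case (3 * b + 2) (3 * c + 2) q
        (min ((3 * b + 2) + (3 * c + 2) - 2*q) b)
        (((3 * b + 2) + (3 * c + 2) - 2*q) - min ((3 * b + 2) + (3 * c + 2) - 2*q) b)
        (by omega) (by omega) (by omega)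
  · intro p hp
    by_contra hlt
    push_neg at hlt
    exact not_case b c hb hc (hp (b+c+1) (by omega))
end

section
/- Let m = 3b+g and n = 3c+h where b, c are nonnegative integers and 0 ≤ g, h ≤ 2. Then for every q ≥ b+c+2, the complete bipartite graph K_{m,n} admits an equitable (q,1)-tree-coloring. Consequently va≡₁(K_{m,n}) ≤ b+c+2. -/
open Finset

set_option linter.unnecessarySimpa false


open Finset

def clF (t M x : ℕ) : ℕ := if x < 3*t then x / 3 else t + (x - 3*t) % M

lemma mod_char {M r y : ℕ} (hr : r < M) (hy : y < 2*M) : y % M = r ↔ y = r ∨ y = M + r := by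
  have hM : 0 < M := lt_of_le_of_lt (Nat.zero_le r) hr
  constructor
  · intro hmod
    have hd := Nat.div_add_mod y M
    have h2 : y / M < 2 := Nat.div_lt_of_lt_mul (by omega)
    interval_cases h : y / M <;> omega
  · rintro (rfl | rfl)
    · exact Nat.mod_eq_of_lt hr
    · rw [Nat.add_mod_left]; exact Nat.mod_eq_of_lt hr

lemma cl_card_lo (t M N k : ℕ) (h3t : 3*t ≤ N) (hk : k < t) :
    ((Finset.range N).filter (fun x => clF t M x = k)).card = 3 := by
  have hset : (Finset.range N).filter (fun x => clF t M x = k)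
      = {3*k, 3*k+1, 3*k+2} := by
    ext x
    simp only [Finset.mem_filter, Finset.mem_range, Finset.mem_insert,
      Finset.mem_singleton]
    simp only [clF]
    constructor
    · rintro ⟨hxN, hcl⟩
      by_cases hx : x < 3*t
      · rw [if_pos hx] at hcl; omega
      · rw [if_neg hx] at hcl; omega
    · rintro (rfl | rfl | rfl) <;>
        refine ⟨by omega, ?_⟩ <;> rw [if_pos (by omega)] <;> omega
  rw [hset,
    Finset.card_insert_of_notMem (by simp only [Finset.mem_insert, Finset.mem_singleton]; omega),
    Finset.card_insert_of_notMem (by simp only [Finset.mem_singleton]; omega),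
    Finset.card_singleton]

lemma cl_card_hi (t M N k : ℕ) (hM : 0 < M) (hNP : N ≤ 3*t + 2*M) (hk : t ≤ k)
    (hkM : k - t < M) :
    ((Finset.range N).filter (fun x => clF t M x = k)).card
      = (if 3*t + (k-t) < N then 1 else 0) + (if 3*t + M + (k-t) < N then 1 else 0) := by
  set r := k - t with hr
  have hmem : ∀ x, (x < N ∧ clF t M x = k) ↔ (x = 3*t+r ∧ x < N) ∨ (x = 3*t+M+r ∧ x < N) := by
    intro x
    constructor
    · rintro ⟨hxN, hcl⟩
      unfold clF at hcl
      by_cases hx : x < 3*t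
      · rw [if_pos hx] at hcl; omega
      · rw [if_neg hx] at hcl
        have hmod : (x - 3*t) % M = r := by omega
        have hy : x - 3*t < 2*M := by omega
        have := (mod_char hkM hy).1 hmod
        omega
    · have e1 : clF t M (3*t+r) = k := by
        unfold clF; rw [if_neg (by omega)]
        have h' : 3*t + r - 3*t = r := by omega
        rw [h', Nat.mod_eq_of_lt hkM]; omega
      have e2 : clF t M (3*t+M+r) = k := by
        unfold clF; rw [if_neg (by omega)]
        have h' : 3*t + M + r - 3*t = M + r := by omega
        rw [h', Nat.add_mod_left, Nat.mod_eq_of_lt hkM]; omega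
      rintro (⟨rfl, hlt⟩ | ⟨rfl, hlt⟩) <;> exact ⟨hlt, by assumption⟩
  have hset : (Finset.range N).filter (fun x => clF t M x = k)
      = if 3*t + M + r < N then ({3*t+r, 3*t+M+r} : Finset ℕ)
        else if 3*t + r < N then {3*t+r} else ∅ := by
    split_ifs with h1 h2
    · ext x
      simp only [Finset.mem_filter, Finset.mem_range, Finset.mem_insert, Finset.mem_singleton]
      constructor
      · intro hx
        rcases (hmem x).1 hx with ⟨rfl, _⟩ | ⟨rfl, _⟩
        exacts [Or.inl rfl, Or.inr rfl]
      · rintro (rfl | rfl)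
        · exact (hmem _).2 (Or.inl ⟨rfl, by omega⟩)
        · exact (hmem _).2 (Or.inr ⟨rfl, h1⟩)
    · ext x
      simp only [Finset.mem_filter, Finset.mem_range, Finset.mem_singleton]
      constructor
      · intro hx
        rcases (hmem x).1 hx with ⟨rfl, _⟩ | ⟨rfl, hlt⟩
        · rfl
        · omega
      · rintro rfl
        exact (hmem _).2 (Or.inl ⟨rfl, h2⟩)
    · ext x
      simp only [Finset.mem_filter, Finset.mem_range, Finset.notMem_empty, iff_false]
      intro hx
      rcases (hmem x).1 hx with ⟨rfl, hlt⟩ | ⟨rfl, hlt⟩ <;> omega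
  by_cases h1 : 3*t + M + r < N
  · have h2 : 3*t + r < N := by omega
    rw [hset, if_pos h1, if_pos h2, if_pos h1, Finset.card_pair (by omega)]
  · by_cases h2 : 3*t + r < N
    · rw [hset, if_neg h1, if_pos h2, if_pos h2, if_neg h1, Finset.card_singleton]
    · rw [hset, if_neg h1, if_neg h2, if_neg h2, if_neg h1, Finset.card_empty]

def idxF (m n t1 t2 : ℕ) (v : Σ i : Fin 2, Fin (![m, n] i)) : ℕ :=
  if (v.1 : ℕ) = 0 then
    (if (v.2 : ℕ) < 3*t1 then (v.2 : ℕ) else 3*(t1+t2) + ((v.2 : ℕ) - 3*t1))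
  else
    (if (v.2 : ℕ) < 3*t2 then 3*t1 + (v.2 : ℕ)
     else 3*(t1+t2) + (m - 3*t1) + ((v.2 : ℕ) - 3*t2))

lemma snd_lt (m n : ℕ) (v : Σ i : Fin 2, Fin (![m, n] i)) :
    ((v.1 : ℕ) = 0 ∧ (v.2 : ℕ) < m) ∨ ((v.1 : ℕ) = 1 ∧ (v.2 : ℕ) < n) := by
  rcases v with ⟨i, j⟩
  have hj := j.isLt
  match i with
  | ⟨0, _⟩ => exact Or.inl ⟨rfl, by simpa using hj⟩
  | ⟨1, _⟩ => exact Or.inr ⟨rfl, by simpa using hj⟩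

theorem auxthm (m n q t1 t2 : ℕ) (h1 : 3*t1 ≤ m) (h2 : 3*t2 ≤ n) (h3 : t1+t2+2 ≤ q)
    (h4 : m+n ≤ 2*q + (t1+t2)) (h5 : 0 < t1+t2 → m+n = 2*q + (t1+t2)) :
    IsEqTreeColoring (CompleteMultipartite 2 ![m, n]) q := by
  set t := t1 + t2 with ht
  set N := m + n with hN
  set M := q - t with hMdef
  have hM0 : 0 < M := by omega
  have h3tN : 3*t ≤ N := by omega
  have hNP : N ≤ 3*t + 2*M := by omega
  have hNfull : 0 < t → N = 3*t + 2*M := by intro h; have := h5 h; omega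
  have hclq : ∀ x, clF t M x < q := by
    intro x; unfold clF; split_ifs with hx
    · have : x / 3 < t := by omega
      omega
    · have := Nat.mod_lt (x - 3*t) hM0; omega
  set V := (Σ i : Fin 2, Fin (![m, n] i)) with hV
  set idx : V → ℕ := idxF m n t1 t2 with hidx
  set C : V → Fin q := fun v => ⟨clF t M (idx v), hclq _⟩ with hC
  -- range facts
  have hrange : ∀ v : V,
      ((v.1 : ℕ) = 0 ∧ ((idx v < 3*t1) ∨ (3*t ≤ idx v ∧ idx v < 3*t + (m - 3*t1)))) ∨
      ((v.1 : ℕ) = 1 ∧ ((3*t1 ≤ idx v ∧ idx v < 3*t) ∨ (3*t + (m - 3*t1) ≤ idx v ∧ idx v < N))) := by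
    intro v
    rcases snd_lt m n v with ⟨h0, hlt⟩ | ⟨h0, hlt⟩
    · left; refine ⟨h0, ?_⟩
      rw [hidx]; unfold idxF; rw [if_pos h0]
      split_ifs with hv <;> omega
    · right; refine ⟨h0, ?_⟩
      rw [hidx]; unfold idxF; rw [if_neg (show ¬((v.1 : ℕ) = 0) by omega)]
      split_ifs with hv <;> omega
  have hidx_lt : ∀ v : V, idx v < N := by
    intro v
    rcases hrange v with ⟨_, hr | hr⟩ | ⟨_, hr | hr⟩ <;> omega
  -- injectivity
  have hinj : Function.Injective idx := by
    intro v w he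
    rcases snd_lt m n v with ⟨hv0, hvlt⟩ | ⟨hv0, hvlt⟩ <;>
      rcases snd_lt m n w with ⟨hw0, hwlt⟩ | ⟨hw0, hwlt⟩
    · -- both side 0
      have hval : (v.2 : ℕ) = (w.2 : ℕ) := by
        rw [hidx] at he; unfold idxF at he
        rw [if_pos hv0, if_pos hw0] at he
        split_ifs at he <;> omega
      rcases v with ⟨i, j⟩; rcases w with ⟨i', j'⟩
      exact Sigma.ext (Fin.ext (by omega))
        ((Fin.heq_ext_iff (by congr 1; exact Fin.ext (by omega))).2 hval)
    · exfalso
      rw [hidx] at he; unfold idxF at he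
      rw [if_pos hv0, if_neg (show ¬((w.1 : ℕ) = 0) by omega)] at he
      split_ifs at he <;> omega
    · exfalso
      rw [hidx] at he; unfold idxF at he
      rw [if_neg (show ¬((v.1 : ℕ) = 0) by omega), if_pos hw0] at he
      split_ifs at he <;> omega
    · have hval : (v.2 : ℕ) = (w.2 : ℕ) := by
        rw [hidx] at he; unfold idxF at he
        rw [if_neg (show ¬((v.1 : ℕ) = 0) by omega),
            if_neg (show ¬((w.1 : ℕ) = 0) by omega)] at he
        split_ifs at he <;> omega
      rcases v with ⟨i, j⟩; rcases w with ⟨i', j'⟩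
      exact Sigma.ext (Fin.ext (by omega))
        ((Fin.heq_ext_iff (by congr 1; exact Fin.ext (by omega))).2 hval)
  -- bijectivity onto Fin N
  have hbij : Function.Bijective (fun v : V => (⟨idx v, hidx_lt v⟩ : Fin N)) := by
    rw [Fintype.bijective_iff_injective_and_card]
    constructor
    · intro v w he
      exact hinj (congrArg Fin.val he)
    · simp [hV, Fintype.card_sigma, Fin.sum_univ_two, hN]
  have hsurj : ∀ x : ℕ, x < N → ∃ v : V, idx v = x := by
    intro x hx
    obtain ⟨v, hv⟩ := hbij.2 ⟨x, hx⟩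
    exact ⟨v, congrArg Fin.val hv⟩
  -- cardinality transfer
  have hcardV : ∀ k : Fin q, (univ.filter (fun v : V => C v = k)).card
      = ((Finset.range N).filter (fun x => clF t M x = (k : ℕ))).card := by
    intro k
    apply Finset.card_bij (fun v _ => idx v)
    · intro v hv
      simp only [Finset.mem_filter, Finset.mem_univ, true_and] at hv
      simp only [Finset.mem_filter, Finset.mem_range]
      exact ⟨hidx_lt v, congrArg Fin.val hv⟩
    · intro v1 _ v2 _ he
      exact hinj he
    · intro x hx
      simp only [Finset.mem_filter, Finset.mem_range] at hx
      obtain ⟨v, rfl⟩ := hsurj x hx.1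
      refine ⟨v, ?_, rfl⟩
      simp only [Finset.mem_filter, Finset.mem_univ, true_and]
      exact Fin.ext hx.2
  refine ⟨C, ?_, ?_⟩
  · -- equitable
    intro i j
    rw [hcardV i, hcardV j]
    have hiq : (i : ℕ) < q := i.isLt
    have hjq : (j : ℕ) < q := j.isLt
    rcases lt_or_ge (i : ℕ) t with hi | hi <;> rcases lt_or_ge (j : ℕ) t with hj | hj
    · rw [cl_card_lo t M N _ h3tN hi, cl_card_lo t M N _ h3tN hj]
      omega
    · rw [cl_card_lo t M N _ h3tN hi, cl_card_hi t M N _ hM0 hNP hj (by omega)]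
      have hNf := hNfull (by omega)
      split_ifs <;> omega
    · rw [cl_card_hi t M N _ hM0 hNP hi (by omega), cl_card_lo t M N _ h3tN hj]
      split_ifs <;> omega
    · rw [cl_card_hi t M N _ hM0 hNP hi (by omega), cl_card_hi t M N _ hM0 hNP hj (by omega)]
      split_ifs <;> omega
  · -- forest condition
    intro v w x hw hx hvw hvx
    have hvw' : v.1 ≠ w.1 := hvw
    have hvx' : v.1 ≠ x.1 := hvx
    have hwv : clF t M (idx w) = clF t M (idx v) := congrArg Fin.val hw
    have hxv : clF t M (idx x) = clF t M (idx v) := congrArg Fin.val hx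
    by_cases hcase : clF t M (idx v) < t
    · exfalso
      -- triple classes lie within one side
      have key : ∀ u : V, clF t M (idx u) < t →
          ((u.1 : ℕ) = 0 ∧ idx u < 3*t1) ∨ ((u.1 : ℕ) = 1 ∧ 3*t1 ≤ idx u ∧ idx u < 3*t) := by
        intro u hu
        have hlt3t : idx u < 3*t := by
          by_contra hge
          unfold clF at hu
          rw [if_neg hge] at hu
          omega
        rcases hrange u with ⟨h0, hr | hr⟩ | ⟨h0, hr | hr⟩
        · exact Or.inl ⟨h0, hr⟩
        · omega
        · exact Or.inr ⟨h0, hr⟩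
        · omega
      have hclv : clF t M (idx v) = idx v / 3 := by
        have hlt : idx v < 3*t := by
          rcases key v hcase with ⟨_, h'⟩ | ⟨_, h'⟩ <;> omega
        unfold clF; rw [if_pos hlt]
      have hclw : clF t M (idx w) = idx w / 3 := by
        have hlt : idx w < 3*t := by
          rcases key w (hwv ▸ hcase) with ⟨_, h'⟩ | ⟨_, h'⟩ <;> omega
        unfold clF; rw [if_pos hlt]
      have h1v : (v.1 : ℕ) = 0 ∨ (v.1 : ℕ) = 1 := by omega
      rcases key v hcase with ⟨h0v, hrv⟩ | ⟨h0v, hrv⟩ <;>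
        rcases key w (hwv ▸ hcase) with ⟨h0w, hrw⟩ | ⟨h0w, hrw⟩
      · exact hvw' (Fin.ext (by omega))
      · rw [hclv, hclw] at hwv; omega
      · rw [hclv, hclw] at hwv; omega
      · exact hvw' (Fin.ext (by omega))
    · -- pair classes have at most 2 elements
      by_contra hne
      have hvw0 : v ≠ w := fun e => hvw' (by rw [e])
      have hvx0 : v ≠ x := fun e => hvx' (by rw [e])
      have hcard3 : ({v, w, x} : Finset V).card = 3 := by
        rw [Finset.card_insert_of_notMem (by simp [hvw0, hvx0]),
          Finset.card_insert_of_notMem (by simpa using hne), Finset.card_singleton]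
      have hsub : ({v, w, x} : Finset V) ⊆ univ.filter (fun u => C u = C v) := by
        intro u hu
        simp only [Finset.mem_insert, Finset.mem_singleton] at hu
        simp only [Finset.mem_filter, Finset.mem_univ, true_and]
        rcases hu with rfl | rfl | rfl
        · rfl
        · exact hw
        · exact hx
      have hle := Finset.card_le_card hsub
      have hCv : ((C v : Fin q) : ℕ) = clF t M (idx v) := rfl
      rw [hcard3, hcardV (C v)] at hle
      have hCvq : ((C v : Fin q) : ℕ) < q := (C v).isLt
      rw [cl_card_hi t M N _ hM0 hNP (by omega) (by omega)] at hle
      split_ifs at hle <;> omega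

theorem stmt5 (b c g h : ℕ) (hg : g ≤ 2) (hh : h ≤ 2) :
    ∀ q, b + c + 2 ≤ q →
      IsEqTreeColoring (CompleteMultipartite 2 ![3 * b + g, 3 * c + h]) q := by
  intro q hq
  exact auxthm (3*b+g) (3*c+h) q
    (min ((3*b+g)+(3*c+h)-2*q) b) (((3*b+g)+(3*c+h)-2*q) - min ((3*b+g)+(3*c+h)-2*q) b)
    (by omega) (by omega) (by omega) (by omega) (by omega)
end

section
/- For the complete k-partite graph K_{k*1} (i.e., the complete graph K_k) and for K_{k*2} (complete k-partite with all parts of size 2), with N the number of vertices, the strong equitable vertex 1-arboricity equals ⌈N/2⌉. -/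
open Finset

/-- An equitable coloring with all classes of size at most 2 exists whenever
`card V ≤ 2 * q`. -/
lemma exists_eq_coloring (V : Type) [Fintype V] [DecidableEq V] (q : ℕ) (hq : 0 < q)
    (hN : Fintype.card V ≤ 2 * q) :
    ∃ C : V → Fin q, EquitableSizes C ∧
      ∀ i : Fin q, (univ.filter (fun v => C v = i)).card ≤ 2 := by
  classical
  set N := Fintype.card V with hNdef
  let e := Fintype.equivFin V
  refine ⟨fun v => ⟨(e v).val % q, Nat.mod_lt _ hq⟩, ?_⟩
  have hcard : ∀ i : Fin q,
      (univ.filter (fun v => (⟨(e v).val % q, Nat.mod_lt _ hq⟩ : Fin q) = i)).card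
        = N / q + if i.val < N % q then 1 else 0 := by
    intro i
    have step1 : (univ.filter (fun v => (⟨(e v).val % q, Nat.mod_lt _ hq⟩ : Fin q) = i)).card
        = (univ.filter (fun m : Fin N => m.val % q = i.val)).card := by
      refine Finset.card_equiv e ?_
      intro v
      simp [Fin.ext_iff]
    have step2 : (univ.filter (fun m : Fin N => m.val % q = i.val)).card
        = ((range N).filter (fun m => m % q = i.val)).card := by
      refine Finset.card_bij (fun m _ => m.val) ?_ ?_ ?_
      · intro m hm; simp only [mem_filter, mem_range] at *
        exact ⟨m.isLt, by simpa using hm⟩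
      · intro m₁ _ m₂ _ h; exact Fin.val_injective h
      · intro m hm; simp only [mem_filter, mem_range] at hm
        exact ⟨⟨m, hm.1⟩, by simp [hm.2], rfl⟩
    have step3 : ((range N).filter (fun m => m % q = i.val)).card
        = Nat.count (· ≡ i.val [MOD q]) N := by
      rw [Nat.count_eq_card_filter_range]
      refine congrArg _ (Finset.filter_congr ?_)
      intro m _
      simp [Nat.ModEq, Nat.mod_eq_of_lt i.isLt]
    rw [step1, step2, step3, Nat.count_modEq_card N hq i.val,
      Nat.mod_eq_of_lt i.isLt]
  have hdiv : N / q ≤ 2 := by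
    calc N / q ≤ 2 * q / q := Nat.div_le_div_right hN
    _ = 2 := Nat.mul_div_cancel 2 hq
  have hdiv2 : N % q ≠ 0 → N / q ≤ 1 := by
    intro h
    have hlt : N < 2 * q := by
      rcases lt_or_eq_of_le hN with h' | h'
      · exact h'
      · exact absurd (h' ▸ Nat.mul_mod_left 2 q) h
    have := (Nat.div_lt_iff_lt_mul hq).mpr hlt
    omega
  constructor
  · intro i j
    rw [hcard i, hcard j]
    split_ifs <;> omega
  · intro i
    rw [hcard i]
    split_ifs with h
    · have := hdiv2 (by omega); omega
    · omega

/-- Among three distinct vertices of a complete multipartite graph with all parts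
of size at most 2, one is adjacent to the other two. -/
lemma triple {k : ℕ} {n : Fin k → ℕ} (hn : ∀ i, n i ≤ 2)
    (a b c : Σ i : Fin k, Fin (n i)) (hab : a ≠ b) (hac : a ≠ c) (hbc : b ≠ c) :
    ∃ v w x : Σ i : Fin k, Fin (n i), w ≠ x ∧ v.1 ≠ w.1 ∧ v.1 ≠ x.1 ∧
      (v = a ∨ v = b ∨ v = c) ∧ (w = a ∨ w = b ∨ w = c) ∧ (x = a ∨ x = b ∨ x = c) := by
  have hall : ¬ (a.1 = b.1 ∧ a.1 = c.1) := by
    rintro ⟨h1, h2⟩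
    obtain ⟨i, a2⟩ := a
    obtain ⟨j, b2⟩ := b
    obtain ⟨l, c2⟩ := c
    dsimp at h1 h2
    subst h1; subst h2
    have hab' : a2 ≠ b2 := fun h => hab (by rw [h])
    have hac' : a2 ≠ c2 := fun h => hac (by rw [h])
    have hbc' : b2 ≠ c2 := fun h => hbc (by rw [h])
    have h3 : ({a2, b2, c2} : Finset (Fin (n i))).card = 3 :=
      Finset.card_eq_three.mpr ⟨a2, b2, c2, hab', hac', hbc', rfl⟩
    have := Finset.card_le_univ ({a2, b2, c2} : Finset (Fin (n i)))
    rw [h3, Fintype.card_fin] at this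
    have := hn i
    omega
  by_cases h1 : a.1 = b.1
  · have hca : c.1 ≠ a.1 := fun h => hall ⟨h1, h.symm⟩
    exact ⟨c, a, b, hab, hca, h1 ▸ hca, by tauto, by tauto, by tauto⟩
  · by_cases h2 : a.1 = c.1
    · exact ⟨b, a, c, hac, Ne.symm h1, h2 ▸ Ne.symm h1, by tauto, by tauto, by tauto⟩
    · exact ⟨a, b, c, hbc, h1, h2, by tauto, by tauto, by tauto⟩

lemma main_lemma (k n : ℕ) (hk : 2 ≤ k) (hn1 : 1 ≤ n) (hn2 : n ≤ 2) :
    IsLeast {p : ℕ | ∀ q, p ≤ q →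
        IsEqTreeColoring (CompleteMultipartite k (fun _ => n)) q} ((k * n + 1) / 2) := by
  classical
  have hcardV : Fintype.card (Σ _ : Fin k, Fin n) = k * n := by
    simp [Fintype.card_sigma, Finset.sum_const, mul_comm]
  have hN2 : 2 ≤ k * n := le_trans hk (Nat.le_mul_of_pos_right k (by omega))
  constructor
  · intro q hq
    have hq0 : 0 < q := by omega
    have hNle : Fintype.card (Σ _ : Fin k, Fin n) ≤ 2 * q := by rw [hcardV]; omega
    obtain ⟨C, hCeq, hC2⟩ := exists_eq_coloring _ q hq0 hNle
    refine ⟨C, hCeq, ?_⟩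
    intro v w x hw hx hvw hvx
    by_contra hne
    have hvw' : v ≠ w := (hvw : v.1 ≠ w.1) ∘ congrArg Sigma.fst
    have hvx' : v ≠ x := (hvx : v.1 ≠ x.1) ∘ congrArg Sigma.fst
    have hsub : ({v, w, x} : Finset (Σ _ : Fin k, Fin n)) ⊆
        univ.filter (fun u => C u = C v) := by
      intro u hu
      simp only [mem_insert, mem_singleton] at hu
      simp only [mem_filter, mem_univ, true_and]
      rcases hu with rfl | rfl | rfl
      · rfl
      · exact hw
      · exact hx
    have h3 : ({v, w, x} : Finset (Σ _ : Fin k, Fin n)).card = 3 :=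
      Finset.card_eq_three.mpr ⟨v, w, x, hvw', hvx', hne, rfl⟩
    have := Finset.card_le_card hsub
    rw [h3] at this
    have := hC2 (C v)
    omega
  · intro p hp
    by_contra hlt
    push_neg at hlt
    set q := (k * n + 1) / 2 - 1 with hqdef
    obtain ⟨C, hCeq, hCtree⟩ := hp q (by omega)
    have hqN : Fintype.card (Fin q) * 2 < Fintype.card (Σ _ : Fin k, Fin n) := by
      rw [hcardV, Fintype.card_fin]; omega
    obtain ⟨i, hi⟩ := Fintype.exists_lt_card_fiber_of_mul_lt_card (f := C) hqN
    obtain ⟨a, b, c, ha, hb, hc, hab, hac, hbc⟩ := Finset.two_lt_card_iff.mp hi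
    simp only [mem_filter, mem_univ, true_and] at ha hb hc
    obtain ⟨v, w, x, hwx, hvw, hvx, hv, hw, hx⟩ :=
      triple (fun _ => hn2) a b c hab hac hbc
    have hCv : C v = i := by rcases hv with rfl | rfl | rfl <;> assumption
    have hCw : C w = C v := by rcases hw with rfl | rfl | rfl <;> (rw [hCv]; assumption)
    have hCx : C x = C v := by rcases hx with rfl | rfl | rfl <;> (rw [hCv]; assumption)
    exact hwx (hCtree v w x hCw hCx hvw hvx)

theorem stmt10 (k : ℕ) (hk : 2 ≤ k) :
    IsLeast {p : ℕ | ∀ q, p ≤ q →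
        IsEqTreeColoring (CompleteMultipartite k (fun _ => 1)) q}
      ((k * 1 + 1) / 2) ∧
    IsLeast {p : ℕ | ∀ q, p ≤ q →
        IsEqTreeColoring (CompleteMultipartite k (fun _ => 2)) q}
      ((k * 2 + 1) / 2) := by
  exact ⟨main_lemma k 1 hk le_rfl (by omega), main_lemma k 2 hk (by omega) le_rfl⟩
end

section
/- Let k ≥ 3 and n = 3b+2 for a positive integer b. Then va≡₁(K_{k*n}) = kb + k. In particular, K_{k*n} has an equitable (q,1)-tree-coloring for every q ≥ kb+k, but has no equitable (kb+k−1, 1)-tree-coloring. -/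
open Finset

namespace Stmt11Aux

def tt (k b q : ℕ) : ℕ := k*(3*b+2) - 2*q
def mf (k b q : ℕ) (i : ℕ) : ℕ := min (tt k b q) (i*b)
def gf (k b q : ℕ) (i : ℕ) : ℕ := mf k b q (i+1) - mf k b q i
def Pf (k b q : ℕ) (i : ℕ) : ℕ := ∑ j ∈ Finset.range i, ((3*b+2) - 3 * gf k b q j)

lemma mf_mono (k b q : ℕ) {i j : ℕ} (h : i ≤ j) : mf k b q i ≤ mf k b q j :=
  min_le_min le_rfl (Nat.mul_le_mul_right _ h)

lemma mf_step (k b q i : ℕ) : mf k b q i ≤ mf k b q (i+1) ∧ mf k b q (i+1) ≤ mf k b q i + b := by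
  simp only [mf, Nat.succ_mul]; omega

lemma gf_le (k b q i : ℕ) : gf k b q i ≤ b := by
  have := mf_step k b q i; simp only [gf]; omega

lemma mf_add_gf (k b q i : ℕ) : mf k b q (i+1) = mf k b q i + gf k b q i := by
  have := mf_step k b q i; simp only [gf]; omega

lemma Pf_eq (k b q : ℕ) : ∀ i, Pf k b q i + 3 * mf k b q i = i * (3*b+2) := by
  intro i
  induction i with
  | zero => simp [Pf, mf]
  | succ n ih =>
    have h1 := mf_add_gf k b q n
    have h2 := gf_le k b q n
    rw [Pf, Finset.sum_range_succ, ← Pf]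
    have : (n+1) * (3*b+2) = n * (3*b+2) + (3*b+2) := by ring
    omega

lemma Pf_mono (k b q : ℕ) {i j : ℕ} (h : i ≤ j) : Pf k b q i ≤ Pf k b q j :=
  Finset.sum_le_sum_of_subset (Finset.range_subset_range.2 h)

section
variable {k b q : ℕ}

/-- key numeric facts under case-1 hypotheses -/
lemma tt_le (hq : k*b+k ≤ q) : tt k b q ≤ k*b := by
  have hN : k*(3*b+2) = 3*(k*b)+2*k := by ring
  simp only [tt]; omega

lemma tt_lt_q (hk : 1 ≤ k) (hb : 1 ≤ b) (hq : k*b+k ≤ q) : tt k b q < q := by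
  have hN : k*(3*b+2) = 3*(k*b)+2*k := by ring
  simp only [tt]; omega

lemma mf_k (hq : k*b+k ≤ q) : mf k b q k = tt k b q :=
  min_eq_left (tt_le hq)

lemma Pf_k (hq : k*b+k ≤ q) : Pf k b q k = k*(3*b+2) - 3 * tt k b q := by
  have h1 := Pf_eq k b q k
  rw [mf_k hq] at h1
  have h2 := tt_le hq
  have hN : k*(3*b+2) = 3*(k*b)+2*k := by ring
  omega

/-- the ℕ-valued coloring, case 1 -/
def C1 (k b q : ℕ) (v : Σ _ : Fin k, Fin (3*b+2)) : ℕ :=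
  if (v.2 : ℕ) < 3 * gf k b q v.1 then mf k b q v.1 + (v.2 : ℕ)/3
  else tt k b q + (Pf k b q v.1 + ((v.2:ℕ) - 3 * gf k b q v.1))/2

lemma C1_lt (hk : 1 ≤ k) (hb : 1 ≤ b) (hq : k*b+k ≤ q) (h2q : 2*q ≤ k*(3*b+2))
    (v : Σ _ : Fin k, Fin (3*b+2)) : C1 k b q v < q := by
  obtain ⟨i, x⟩ := v
  have hik : (i:ℕ) < k := i.isLt
  have hx : (x:ℕ) < 3*b+2 := x.isLt
  have hN : k*(3*b+2) = 3*(k*b)+2*k := by ring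
  have htlt := tt_lt_q hk hb hq
  rw [C1]
  split
  · rename_i h
    have h1 := mf_add_gf k b q i
    have h2 : mf k b q ((i:ℕ)+1) ≤ mf k b q k := mf_mono k b q (by omega)
    rw [mf_k hq] at h2
    simp only at h ⊢
    omega
  · rename_i h
    simp only at h ⊢
    have hg := gf_le k b q i
    have hstep : Pf k b q ((i:ℕ)+1) = Pf k b q i + ((3*b+2) - 3 * gf k b q i) := by
      rw [Pf, Finset.sum_range_succ, ← Pf]
    have h2 : Pf k b q ((i:ℕ)+1) ≤ Pf k b q k := Pf_mono k b q (by omega)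
    rw [Pf_k hq] at h2
    have h3 := tt_le hq
    simp only [tt] at *
    omega

lemma C1_triple_lt (hq : k*b+k ≤ q) {v : Σ _ : Fin k, Fin (3*b+2)}
    (h : (v.2 : ℕ) < 3 * gf k b q v.1) : C1 k b q v < tt k b q := by
  obtain ⟨i, x⟩ := v
  simp only at h
  rw [C1, if_pos h]
  have h1 := mf_add_gf k b q i
  have h2 : mf k b q ((i:ℕ)+1) ≤ mf k b q k := mf_mono k b q (by omega)
  rw [mf_k hq] at h2
  simp only
  omega

/-- inverse facts for triple classes -/
lemma C1_triple_inv (hq : k*b+k ≤ q) {j : ℕ} (hj : j < tt k b q)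
    {v : Σ _ : Fin k, Fin (3*b+2)} (hv : C1 k b q v = j) :
    (v.2 : ℕ) < 3 * gf k b q v.1 ∧ mf k b q v.1 ≤ j ∧ j < mf k b q (v.1+1) ∧
      (v.2:ℕ)/3 + mf k b q v.1 = j := by
  by_cases h : (v.2 : ℕ) < 3 * gf k b q v.1
  · refine ⟨h, ?_, ?_, ?_⟩ <;>
    · have h1 := mf_add_gf k b q v.1
      rw [C1, if_pos h] at hv
      omega
  · exfalso; rw [C1, if_neg h] at hv; omega

lemma interval_inj {F : ℕ → ℕ} (hmono : ∀ {i j : ℕ}, i ≤ j → F i ≤ F j)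
    {j i i' : ℕ} (h1 : F i ≤ j) (h2 : j < F (i+1)) (h3 : F i' ≤ j) (h4 : j < F (i'+1)) :
    i = i' := by
  rcases lt_trichotomy i i' with h|h|h
  · have := hmono (show i+1 ≤ i' by omega); omega
  · exact h
  · have := hmono (show i'+1 ≤ i by omega); omega

lemma fiber_triple_part (hq : k*b+k ≤ q) {j : ℕ} (hj : j < tt k b q)
    {v w : Σ _ : Fin k, Fin (3*b+2)} (hv : C1 k b q v = j) (hw : C1 k b q w = j) :
    v.1 = w.1 := by
  obtain ⟨_, h2, h3, _⟩ := C1_triple_inv hq hj hv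
  obtain ⟨_, h5, h6, _⟩ := C1_triple_inv hq hj hw
  exact Fin.ext (interval_inj (fun h => mf_mono k b q h) h2 h3 h5 h6)

lemma fiber_triple_card (hq : k*b+k ≤ q) {j : ℕ} (hj : j < tt k b q) :
    (univ.filter (fun v : Σ _ : Fin k, Fin (3*b+2) => C1 k b q v = j)).card ≤ 3 := by
  refine le_trans (Finset.card_le_card_of_injOn (t := Finset.range 3)
    (fun v => (v.2 : ℕ) % 3) ?_ ?_) (by simp)
  · intro v _; simp [Nat.mod_lt]
  · intro v hv w hw hmod
    simp only [coe_filter, Set.mem_setOf_eq, mem_univ, true_and] at hv hw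
    have hpart := fiber_triple_part hq hj hv hw
    obtain ⟨_, _, _, h4⟩ := C1_triple_inv hq hj hv
    obtain ⟨_, _, _, h8⟩ := C1_triple_inv hq hj hw
    obtain ⟨i, x⟩ := v; obtain ⟨i', x'⟩ := w
    simp only at hpart hmod h4 h8 ⊢
    subst hpart
    have : (x:ℕ) = (x':ℕ) := by omega
    rw [Fin.ext this]

/-- inverse facts for pool classes -/
lemma C1_pool_inv (hq : k*b+k ≤ q) {j : ℕ} (hj : tt k b q ≤ j)
    {v : Σ _ : Fin k, Fin (3*b+2)} (hv : C1 k b q v = j) :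
    3 * gf k b q v.1 ≤ (v.2:ℕ) ∧
    Pf k b q v.1 ≤ Pf k b q v.1 + ((v.2:ℕ) - 3 * gf k b q v.1) ∧
    Pf k b q v.1 + ((v.2:ℕ) - 3 * gf k b q v.1) < Pf k b q (v.1+1) ∧
    (Pf k b q v.1 + ((v.2:ℕ) - 3 * gf k b q v.1))/2 + tt k b q = j := by
  by_cases h : (v.2 : ℕ) < 3 * gf k b q v.1
  · exfalso
    have := C1_triple_lt hq h
    omega
  · rw [C1, if_neg h] at hv
    have hx : (v.2:ℕ) < 3*b+2 := v.2.isLt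
    have hg := gf_le k b q v.1
    have hstep : Pf k b q ((v.1:ℕ)+1) = Pf k b q v.1 + ((3*b+2) - 3 * gf k b q v.1) := by
      rw [Pf, Finset.sum_range_succ, ← Pf]
    refine ⟨by omega, by omega, by omega, by omega⟩

lemma fiber_pool_card (hq : k*b+k ≤ q) {j : ℕ} (hj : tt k b q ≤ j) :
    (univ.filter (fun v : Σ _ : Fin k, Fin (3*b+2) => C1 k b q v = j)).card ≤ 2 := by
  refine le_trans (Finset.card_le_card_of_injOn (t := Finset.range 2)
    (fun v => (Pf k b q v.1 + ((v.2:ℕ) - 3 * gf k b q v.1)) % 2) ?_ ?_) (by simp)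
  · intro v _; simp [Nat.mod_lt]; omega
  · intro v hv w hw hmod
    simp only [coe_filter, Set.mem_setOf_eq, mem_univ, true_and] at hv hw
    obtain ⟨a1, a2, a3, a4⟩ := C1_pool_inv hq hj hv
    obtain ⟨b1, b2, b3, b4⟩ := C1_pool_inv hq hj hw
    simp only at hmod
    have hpr : Pf k b q v.1 + ((v.2:ℕ) - 3 * gf k b q v.1)
        = Pf k b q w.1 + ((w.2:ℕ) - 3 * gf k b q w.1) := by omega
    have hpart : (v.1 : ℕ) = (w.1 : ℕ) := by
      apply interval_inj (F := Pf k b q) (fun h => Pf_mono k b q h) a2 a3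
      · rw [hpr] at a2 ⊢; exact b2
      · rw [hpr]; exact b3
    obtain ⟨i, x⟩ := v; obtain ⟨i', x'⟩ := w
    simp only at hpart hpr a1 b1 ⊢
    have hie : i = i' := Fin.ext hpart
    subst hie
    have : (x:ℕ) = (x':ℕ) := by omega
    rw [Fin.ext this]

end
end Stmt11Aux
namespace Stmt11Aux

lemma eq_of_card_le_two {α : Type*} [DecidableEq α] {s : Finset α} (hs : s.card ≤ 2)
    {v w x : α} (hv : v ∈ s) (hw : w ∈ s) (hx : x ∈ s) (h1 : v ≠ w) (h2 : v ≠ x) : w = x := by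
  by_contra h3
  have hsub : ({v, w, x} : Finset α) ⊆ s := by
    intro y hy; simp only [Finset.mem_insert, Finset.mem_singleton] at hy
    rcases hy with rfl|rfl|rfl <;> assumption
  have hc := Finset.card_le_card hsub
  rw [Finset.card_insert_of_notMem (by simp [h1, h2]),
      Finset.card_insert_of_notMem (by simp [h3]), Finset.card_singleton] at hc
  omega

lemma exists_third {α : Type*} [DecidableEq α] {s : Finset α} (h : 3 ≤ s.card) (v w : α) :
    ∃ x ∈ s, x ≠ v ∧ x ≠ w := by
  have h1 := Finset.pred_card_le_card_erase (a := w) (s := s.erase v)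
  have h2 := Finset.pred_card_le_card_erase (a := v) (s := s)
  obtain ⟨x, hx⟩ := Finset.card_pos.mp (show 0 < ((s.erase v).erase w).card by omega)
  exact ⟨x, Finset.mem_of_mem_erase (Finset.mem_of_mem_erase hx),
    Finset.ne_of_mem_erase (Finset.mem_of_mem_erase hx), Finset.ne_of_mem_erase hx⟩

lemma eq_of_sum_le {q : ℕ} (f B : Fin q → ℕ) (hle : ∀ j, f j ≤ B j)
    (hsum : ∑ j, B j ≤ ∑ j, f j) : ∀ j, f j = B j := by
  intro j; by_contra h
  have : ∑ j, f j < ∑ j, B j :=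
    Finset.sum_lt_sum (fun i _ => hle i) ⟨j, Finset.mem_univ _, lt_of_le_of_ne (hle j) h⟩
  omega

lemma card_part (k b : ℕ) (i : Fin k) :
    (univ.filter (fun v : Σ _ : Fin k, Fin (3*b+2) => v.1 = i)).card = 3*b+2 := by
  have : (univ.filter (fun v : Σ _ : Fin k, Fin (3*b+2) => v.1 = i))
      = univ.image (fun x : Fin (3*b+2) => (⟨i, x⟩ : Σ _ : Fin k, Fin (3*b+2))) := by
    ext v
    obtain ⟨i', x⟩ := v
    simp [Sigma.ext_iff, eq_comm]
  rw [this, Finset.card_image_of_injective _ sigma_mk_injective, Finset.card_univ,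
    Fintype.card_fin]

lemma card_V (k b : ℕ) :
    Fintype.card (Σ _ : Fin k, Fin (3*b+2)) = k * (3*b+2) := by
  simp [Fintype.card_sigma, Finset.sum_const, mul_comm]

end Stmt11Aux
namespace Stmt11Aux

lemma construct1 (k b q : ℕ) (hk : 1 ≤ k) (hb : 1 ≤ b) (hq : k*b+k ≤ q)
    (h2q : 2*q ≤ k*(3*b+2)) :
    IsEqTreeColoring (CompleteMultipartite k (fun _ => 3*b+2)) q := by
  set C : (Σ _ : Fin k, Fin (3*b+2)) → Fin q :=
    fun v => ⟨C1 k b q v, C1_lt hk hb hq h2q v⟩ with hC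
  refine ⟨C, ?_, ?_⟩
  · -- equitable
    have hfib : ∀ j : Fin q, (univ.filter (fun v => C v = j)).card
        = (univ.filter (fun v : Σ _ : Fin k, Fin (3*b+2) => C1 k b q v = (j:ℕ))).card := by
      intro j; congr 1
      apply Finset.filter_congr
      intro v _
      simp [hC, Fin.ext_iff]
    have hsumf : ∑ j : Fin q,
        (univ.filter (fun v : Σ _ : Fin k, Fin (3*b+2) => C1 k b q v = (j:ℕ))).card
        = k*(3*b+2) := by
      have h := Finset.card_eq_sum_card_fiberwise (f := C) (s := univ) (t := univ)
        (fun x _ => mem_univ _)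
      rw [Finset.card_univ, card_V] at h
      rw [← Finset.sum_congr rfl (fun j _ => hfib j)]
      exact h.symm
    have hsumB : ∑ j : Fin q, (if (j:ℕ) < tt k b q then 3 else 2) = k*(3*b+2) := by
      rw [Fin.sum_univ_eq_sum_range (fun m => if m < tt k b q then 3 else 2) q]
      rw [← Finset.sum_range_add_sum_Ico _ (le_of_lt (tt_lt_q hk hb hq))]
      rw [Finset.sum_congr rfl (fun m hm => if_pos (Finset.mem_range.mp hm)),
          Finset.sum_congr (rfl : Finset.Ico (tt k b q) q = _)
            (fun m hm => if_neg (by have := (Finset.mem_Ico.mp hm).1; omega))]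
      rw [Finset.sum_const, Finset.sum_const, Finset.card_range, Nat.card_Ico]
      have hN : k*(3*b+2) = 3*(k*b)+2*k := by ring
      have h2 := tt_lt_q hk hb hq
      simp only [smul_eq_mul, tt] at *
      omega
    have hle : ∀ j : Fin q,
        (univ.filter (fun v : Σ _ : Fin k, Fin (3*b+2) => C1 k b q v = (j:ℕ))).card
        ≤ (if (j:ℕ) < tt k b q then 3 else 2) := by
      intro j
      by_cases hj : (j:ℕ) < tt k b q
      · rw [if_pos hj]; exact fiber_triple_card hq hj
      · rw [if_neg hj]; exact fiber_pool_card hq (le_of_not_gt hj)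
    have hexact := eq_of_sum_le _ _ hle (by rw [hsumB, hsumf])
    intro i j
    rw [hfib i, hfib j, hexact i, hexact j]
    split <;> split <;> omega
  · -- validity
    intro v w x hw hx hadj1 hadj2
    have hadj1' : v.1 ≠ w.1 := hadj1
    have hadj2' : v.1 ≠ x.1 := hadj2
    have hw' : C1 k b q w = C1 k b q v := congrArg Fin.val hw
    have hx' : C1 k b q x = C1 k b q v := congrArg Fin.val hx
    by_cases hlt : C1 k b q v < tt k b q
    · exact absurd (fiber_triple_part hq hlt rfl hw') hadj1'
    · have hcard := fiber_pool_card (j := C1 k b q v) hq (le_of_not_gt hlt)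
      exact eq_of_card_le_two hcard
        (Finset.mem_filter.mpr ⟨mem_univ _, rfl⟩)
        (Finset.mem_filter.mpr ⟨mem_univ _, hw'⟩)
        (Finset.mem_filter.mpr ⟨mem_univ _, hx'⟩)
        (fun h => hadj1' (congrArg Sigma.fst h))
        (fun h => hadj2' (congrArg Sigma.fst h))

def lexr (k b : ℕ) (v : Σ _ : Fin k, Fin (3*b+2)) : ℕ := (v.1:ℕ) * (3*b+2) + (v.2:ℕ)

lemma lexr_lt (k b : ℕ) (v : Σ _ : Fin k, Fin (3*b+2)) : lexr k b v < k*(3*b+2) := by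
  have h1 : (v.1:ℕ) + 1 ≤ k := v.1.isLt
  have h2 : ((v.1:ℕ) + 1) * (3*b+2) ≤ k * (3*b+2) := Nat.mul_le_mul_right _ h1
  have h3 : (v.2:ℕ) < 3*b+2 := v.2.isLt
  have h4 : ((v.1:ℕ) + 1) * (3*b+2) = (v.1:ℕ) * (3*b+2) + (3*b+2) := by ring
  simp only [lexr]; omega

lemma lexr_div (k b : ℕ) (v : Σ _ : Fin k, Fin (3*b+2)) : lexr k b v / (3*b+2) = v.1 := by
  simp only [lexr]
  rw [mul_comm, Nat.mul_add_div (by omega), Nat.div_eq_of_lt v.2.isLt, add_zero]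

lemma lexr_inj (k b : ℕ) : Function.Injective (lexr k b) := by
  intro v w h
  have hi : (v.1:ℕ) = (w.1:ℕ) := by rw [← lexr_div k b v, ← lexr_div k b w, h]
  obtain ⟨i, x⟩ := v; obtain ⟨i', x'⟩ := w
  simp only at hi
  have hie : i = i' := Fin.ext hi
  subst hie
  simp only [lexr] at h
  have : (x:ℕ) = (x':ℕ) := by omega
  rw [Fin.ext this]

lemma construct2 (k b q : ℕ) (hk : 1 ≤ k) (hq0 : 0 < q) (h2q : k*(3*b+2) < 2*q) :
    IsEqTreeColoring (CompleteMultipartite k (fun _ => 3*b+2)) q := by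
  set C : (Σ _ : Fin k, Fin (3*b+2)) → Fin q :=
    fun v => ⟨lexr k b v % q, Nat.mod_lt _ hq0⟩ with hC
  have hfib : ∀ j : Fin q, (univ.filter (fun v => C v = j)).card
      = (univ.filter (fun v : Σ _ : Fin k, Fin (3*b+2) => lexr k b v % q = (j:ℕ))).card := by
    intro j; congr 1
    apply Finset.filter_congr
    intro v _
    simp [hC, Fin.ext_iff]
  have hcard2 : ∀ j : ℕ,
      (univ.filter (fun v : Σ _ : Fin k, Fin (3*b+2) => lexr k b v % q = j)).card ≤ 2 := by
    intro j
    refine le_trans (Finset.card_le_card_of_injOn (t := Finset.range 2)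
      (fun v => lexr k b v / q) ?_ ?_) (by simp)
    · intro v hv
      simp only [Finset.coe_range, Set.mem_Iio]
      rw [Nat.div_lt_iff_lt_mul hq0]
      have := lexr_lt k b v
      omega
    · intro v hv w hw hdiv
      simp only [coe_filter, Set.mem_setOf_eq, mem_univ, true_and] at hv hw
      simp only at hdiv
      apply lexr_inj k b
      have h1 := Nat.div_add_mod (lexr k b v) q
      have h2 := Nat.div_add_mod (lexr k b w) q
      rw [hdiv] at h1
      omega
  refine ⟨C, ?_, ?_⟩
  · intro i j
    rw [hfib i, hfib j]
    by_cases hNq : k*(3*b+2) ≤ q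
    · -- each fiber has at most one element
      have h1 : (univ.filter (fun v : Σ _ : Fin k, Fin (3*b+2)
          => lexr k b v % q = (i:ℕ))).card ≤ 1 := by
        refine le_trans (Finset.card_le_card_of_injOn (t := Finset.range 1)
          (fun _ => 0) (fun v _ => by simp) ?_) (by simp)
        intro v hv w hw _
        simp only [coe_filter, Set.mem_setOf_eq, mem_univ, true_and] at hv hw
        apply lexr_inj k b
        rw [← Nat.mod_eq_of_lt (lt_of_lt_of_le (lexr_lt k b v) hNq),
          ← Nat.mod_eq_of_lt (lt_of_lt_of_le (lexr_lt k b w) hNq), hv, hw]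
      omega
    · push_neg at hNq
      have h1 := hcard2 (i:ℕ)
      have h2 : 0 < (univ.filter (fun v : Σ _ : Fin k, Fin (3*b+2)
          => lexr k b v % q = (j:ℕ))).card := by
        rw [Finset.card_pos]
        have hjN : (j:ℕ) < k*(3*b+2) := lt_trans j.isLt hNq
        have hdl : (j:ℕ)/(3*b+2) < k := by
          rw [Nat.div_lt_iff_lt_mul (by omega)]
          omega
        refine ⟨⟨⟨(j:ℕ)/(3*b+2), hdl⟩, ⟨(j:ℕ) % (3*b+2), Nat.mod_lt _ (by omega)⟩⟩, ?_⟩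
        rw [Finset.mem_filter]
        refine ⟨mem_univ _, ?_⟩
        have hlx : lexr k b ⟨⟨(j:ℕ)/(3*b+2), hdl⟩, ⟨(j:ℕ) % (3*b+2), Nat.mod_lt _ (by omega)⟩⟩
            = (j:ℕ) := by
          show ((j:ℕ)/(3*b+2))*(3*b+2) + (j:ℕ)%(3*b+2) = (j:ℕ)
          rw [mul_comm]
          exact Nat.div_add_mod (j:ℕ) (3*b+2)
        rw [hlx, Nat.mod_eq_of_lt j.isLt]
      omega
  · intro v w x hw hx hadj1 hadj2
    have hadj1' : v.1 ≠ w.1 := hadj1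
    have hadj2' : v.1 ≠ x.1 := hadj2
    have hw' : lexr k b w % q = lexr k b v % q := congrArg Fin.val hw
    have hx' : lexr k b x % q = lexr k b v % q := congrArg Fin.val hx
    exact eq_of_card_le_two (hcard2 (lexr k b v % q))
      (Finset.mem_filter.mpr ⟨mem_univ _, rfl⟩)
      (Finset.mem_filter.mpr ⟨mem_univ _, hw'⟩)
      (Finset.mem_filter.mpr ⟨mem_univ _, hx'⟩)
      (fun h => hadj1' (congrArg Sigma.fst h))
      (fun h => hadj2' (congrArg Sigma.fst h))

end Stmt11Aux
namespace Stmt11Aux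

lemma no_coloring (k b : ℕ) (hk : 3 ≤ k) (hb : 1 ≤ b) :
    ¬ IsEqTreeColoring (CompleteMultipartite k (fun _ => 3*b+2)) (k*b+k-1) := by
  intro hcol
  set q := k*b+k-1 with hqdef
  obtain ⟨C, hEq, hVal⟩ := hcol
  have hkb : k ≤ k*b := Nat.le_mul_of_pos_right k hb
  set f : Fin q → ℕ := fun j => (univ.filter (fun v => C v = j)).card with hf
  have hsum : ∑ j, f j = k*(3*b+2) := by
    have h := Finset.card_eq_sum_card_fiberwise (f := C) (s := univ) (t := univ)
      (fun x _ => mem_univ _)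
    rw [Finset.card_univ, card_V] at h
    exact h.symm
  set T : Finset (Fin q) := univ.filter (fun j => 3 ≤ f j) with hT
  -- every big class lies in one part
  have hpart : ∀ j ∈ T, ∀ v ∈ univ.filter (fun v => C v = j),
      ∀ w ∈ univ.filter (fun v => C v = j), v.1 = w.1 := by
    intro j hj v hv w hw
    by_contra hne
    have hvj : C v = j := (Finset.mem_filter.mp hv).2
    have hwj : C w = j := (Finset.mem_filter.mp hw).2
    have h3 : 3 ≤ f j := (Finset.mem_filter.mp hj).2
    obtain ⟨x, hx, hxv, hxw⟩ := exists_third h3 v w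
    have hxj : C x = j := (Finset.mem_filter.mp hx).2
    by_cases hxvp : x.1 = v.1
    · have hadj1 : (CompleteMultipartite k (fun _ => 3*b+2)).Adj w v := fun h => hne h.symm
      have hadj2 : (CompleteMultipartite k (fun _ => 3*b+2)).Adj w x := by
        intro h
        exact hne (hxvp.symm.trans h.symm)
      have := hVal w v x (hvj.trans hwj.symm) (hxj.trans hwj.symm) hadj1 hadj2
      exact hxv this.symm
    · have hadj1 : (CompleteMultipartite k (fun _ => 3*b+2)).Adj v w := hne
      have hadj2 : (CompleteMultipartite k (fun _ => 3*b+2)).Adj v x := fun h => hxvp h.symm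
      have := hVal v w x (hwj.trans hvj.symm) (hxj.trans hvj.symm) hadj1 hadj2
      exact hxw this.symm
  have hkpos : 0 < k := by omega
  set pc : Fin q → Fin k := fun j =>
    if h : (univ.filter (fun v => C v = j)).Nonempty then h.choose.1 else ⟨0, hkpos⟩ with hpc
  have hpc_spec : ∀ j ∈ T, ∀ v ∈ univ.filter (fun v => C v = j), v.1 = pc j := by
    intro j hj v hv
    have hne : (univ.filter (fun v => C v = j)).Nonempty := ⟨v, hv⟩
    have : pc j = hne.choose.1 := by rw [hpc]; exact dif_pos hne
    rw [this]
    exact hpart j hj v hv hne.choose hne.choose_spec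
  have hTcard : T.card ≤ k * b := by
    have h1 : T.card = ∑ i : Fin k, (T.filter (fun j => pc j = i)).card :=
      Finset.card_eq_sum_card_fiberwise (fun j _ => mem_univ _)
    have h2 : ∀ i : Fin k, (T.filter (fun j => pc j = i)).card ≤ b := by
      intro i
      set S := T.filter (fun j => pc j = i) with hS
      have hdisj : ∀ j ∈ S, ∀ j' ∈ S, j ≠ j' →
          Disjoint (univ.filter (fun v => C v = j)) (univ.filter (fun v => C v = j')) := by
        intro j _ j' _ hne
        rw [Finset.disjoint_left]
        intro v hv hv'
        exact hne ((Finset.mem_filter.mp hv).2.symm.trans (Finset.mem_filter.mp hv').2)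
      have hsub : S.biUnion (fun j => univ.filter (fun v => C v = j))
          ⊆ univ.filter (fun v => v.1 = i) := by
        intro v hv
        obtain ⟨j, hjS, hvj⟩ := Finset.mem_biUnion.mp hv
        have hjT : j ∈ T := (Finset.mem_filter.mp hjS).1
        have hji : pc j = i := (Finset.mem_filter.mp hjS).2
        exact Finset.mem_filter.mpr ⟨mem_univ _, (hpc_spec j hjT v hvj).trans hji⟩
      have hc1 := Finset.card_biUnion hdisj
      have hc2 := Finset.card_le_card hsub
      rw [card_part] at hc2
      rw [hc1] at hc2
      have hc3 : ∑ _j ∈ S, (3:ℕ) ≤ ∑ j ∈ S, f j :=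
        Finset.sum_le_sum (fun j hj =>
          (Finset.mem_filter.mp ((Finset.mem_filter.mp hj).1)).2)
      rw [Finset.sum_const, smul_eq_mul] at hc3
      have : ∑ j ∈ S, f j = ∑ u ∈ S, (univ.filter (fun v => C v = u)).card := rfl
      omega
    calc T.card = ∑ i : Fin k, (T.filter (fun j => pc j = i)).card := h1
      _ ≤ ∑ _i : Fin k, b := Finset.sum_le_sum fun i _ => h2 i
      _ = k*b := by simp [Finset.sum_const, mul_comm]
  have hq3 : k*b + 2 ≤ q := by omega
  have hTne : ∃ j0 : Fin q, f j0 ≤ 2 := by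
    by_contra hno
    push_neg at hno
    have hTuniv : T = univ := by
      ext j
      simp only [hT, Finset.mem_filter, mem_univ, true_and]
      exact ⟨fun _ => trivial, fun _ => hno j⟩
    rw [hTuniv, Finset.card_univ, Fintype.card_fin] at hTcard
    omega
  obtain ⟨j0, hj0⟩ := hTne
  have hj0' : (univ.filter (fun v => C v = j0)).card ≤ 2 := hj0
  have hle3 : ∀ j, f j ≤ 3 := fun j => le_trans (hEq j j0) (by omega)
  have hbound : ∑ j, f j ≤ ∑ j : Fin q, (if j ∈ T then 3 else 2) := by
    refine Finset.sum_le_sum fun j _ => ?_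
    by_cases hj : j ∈ T
    · rw [if_pos hj]; exact hle3 j
    · rw [if_neg hj]
      have : ¬ 3 ≤ f j := by
        intro h3
        exact hj (Finset.mem_filter.mpr ⟨mem_univ _, h3⟩)
      omega
  have hite : ∑ j : Fin q, (if j ∈ T then 3 else 2) = 2*q + T.card := by
    have hstep : ∀ j : Fin q, (if j ∈ T then 3 else 2) = 2 + (if j ∈ T then 1 else 0) := by
      intro j; split <;> rfl
    rw [Finset.sum_congr rfl fun j _ => hstep j, Finset.sum_add_distrib,
      Finset.sum_const, Finset.sum_ite_mem, Finset.univ_inter, Finset.sum_const,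
      Finset.card_univ, Fintype.card_fin]
    simp [mul_comm]
  have hfinal : k*(3*b+2) ≤ 2*q + T.card := by
    rw [← hsum, ← hite]
    exact hbound
  have hN : k*(3*b+2) = 3*(k*b)+2*k := by ring
  omega

end Stmt11Aux

theorem stmt11 (k b : ℕ) (hk : 3 ≤ k) (hb : 1 ≤ b) :
    IsLeast {p : ℕ | ∀ q, p ≤ q →
        IsEqTreeColoring (CompleteMultipartite k (fun _ => 3 * b + 2)) q}
      (k * b + k) ∧
    (∀ q, k * b + k ≤ q →
        IsEqTreeColoring (CompleteMultipartite k (fun _ => 3 * b + 2)) q) ∧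
    ¬ IsEqTreeColoring (CompleteMultipartite k (fun _ => 3 * b + 2)) (k * b + k - 1) := by

  have hkb : k ≤ k*b := Nat.le_mul_of_pos_right k hb
  have hpart2 : ∀ q, k * b + k ≤ q →
      IsEqTreeColoring (CompleteMultipartite k (fun _ => 3 * b + 2)) q := by
    intro q hq
    by_cases h2q : 2*q ≤ k*(3*b+2)
    · exact Stmt11Aux.construct1 k b q (by omega) hb hq h2q
    · exact Stmt11Aux.construct2 k b q (by omega) (by omega) (by omega)
  have hpart3 := Stmt11Aux.no_coloring k b hk hb
  refine ⟨⟨hpart2, ?_⟩, hpart2, hpart3⟩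
  intro p hp
  by_contra hlt
  push_neg at hlt
  exact hpart3 (hp (k*b+k-1) (by omega))
end

section
/- Let k ≥ 3, k ≠ 4, and n = 3b+1 for a positive integer b. Then K_{k*n} has no equitable (kb + ⌈k/2⌉ − 1, 1)-tree-coloring. -/
open Finset

theorem stmt12 (k b : ℕ) (hk : 3 ≤ k) (hk4 : k ≠ 4) (hb : 1 ≤ b) :
    ¬ IsEqTreeColoring (CompleteMultipartite k (fun _ => 3 * b + 1))
        (k * b + (k + 1) / 2 - 1) := by
  classical
  set q : ℕ := k * b + (k + 1) / 2 - 1 with hqdef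
  rintro ⟨C, hEq, hDeg⟩
  have hk0 : 0 < k := by omega
  let sz : Fin q → ℕ := fun c => (univ.filter (fun v => C v = c)).card
  -- every class of size ≥ 3 lies within a single part
  have hpart : ∀ c : Fin q, 3 ≤ sz c → ∀ v w, C v = c → C w = c → v.1 = w.1 := by
    intro c h3 v w hv hw
    by_contra hne
    have hsub : ¬ (univ.filter (fun x => C x = c)) ⊆ {v, w} := by
      intro hs
      have h2 := Finset.card_le_card hs
      have hle2 : ({v, w} : Finset _).card ≤ 2 :=
        (Finset.card_insert_le _ _).trans (by simp)
      have : 3 ≤ (univ.filter (fun x => C x = c)).card := h3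
      omega
    obtain ⟨z, hz, hznot⟩ := Finset.not_subset.mp hsub
    simp only [Finset.mem_filter, Finset.mem_univ, true_and] at hz
    simp only [Finset.mem_insert, Finset.mem_singleton, not_or] at hznot
    obtain ⟨hzv, hzw⟩ := hznot
    by_cases h : z.1 = v.1
    · have hzw1 : z.1 ≠ w.1 := by rw [h]; exact hne
      have := hDeg w v z (hv.trans hw.symm) (hz.trans hw.symm)
        (Ne.symm hne) (Ne.symm hzw1)
      exact hzv this.symm
    · have := hDeg v w z (hw.trans hv.symm) (hz.trans hv.symm)
        hne (Ne.symm h)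
      exact hzw this.symm
  -- the part containing a (nonempty) class
  let P : Fin q → Fin k := fun c =>
    if h : (univ.filter (fun v => C v = c)).Nonempty then h.choose.1 else ⟨0, hk0⟩
  have hP : ∀ c : Fin q, 3 ≤ sz c → ∀ v, C v = c → v.1 = P c := by
    intro c h3 v hv
    have hpos : 0 < sz c := by omega
    have hne : (univ.filter (fun v => C v = c)).Nonempty := Finset.card_pos.mp hpos
    have hu := hne.choose_spec
    simp only [Finset.mem_filter, Finset.mem_univ, true_and] at hu
    have hPc : P c = hne.choose.1 := dif_pos hne
    rw [hPc]
    exact hpart c h3 v hne.choose hv hu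
  -- each part has exactly 3b+1 vertices
  have hpcard : ∀ i : Fin k,
      (univ.filter (fun v : (Σ _ : Fin k, Fin (3 * b + 1)) => v.1 = i)).card
        = 3 * b + 1 := by
    intro i
    have hmap : (univ.filter (fun v : (Σ _ : Fin k, Fin (3 * b + 1)) => v.1 = i)) =
        univ.map ⟨fun x : Fin (3 * b + 1) => ⟨i, x⟩,
          fun x y h => by simpa using h⟩ := by
      ext v
      rcases v with ⟨j, x⟩
      simp only [Finset.mem_filter, Finset.mem_univ, true_and, Finset.mem_map,
        Function.Embedding.coeFn_mk]
      constructor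
      · rintro rfl
        exact ⟨x, rfl⟩
      · rintro ⟨y, h⟩
        exact (congrArg Sigma.fst h).symm
    rw [hmap, Finset.card_map, Finset.card_univ, Fintype.card_fin]
  -- classes of size ≥ 3
  set A : Finset (Fin q) := univ.filter (fun c => 3 ≤ sz c) with hA
  -- at most b big classes per part
  have hSi : ∀ i : Fin k, (A.filter (fun c => P c = i)).card ≤ b := by
    intro i
    set S := A.filter (fun c => P c = i) with hS
    have hsub : (univ.filter (fun v => C v ∈ S)) ⊆ (univ.filter (fun v => v.1 = i)) := by
      intro v hv
      simp only [Finset.mem_filter, Finset.mem_univ, true_and] at hv ⊢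
      rw [hS, Finset.mem_filter, hA, Finset.mem_filter] at hv
      exact hv.2 ▸ hP (C v) hv.1.2 v rfl
    have hcard1 : (univ.filter (fun v => C v ∈ S)).card = ∑ c ∈ S, sz c := by
      rw [Finset.card_eq_sum_card_fiberwise (f := C) (t := S)
        (fun v hv => by simpa using hv)]
      apply Finset.sum_congr rfl
      intro c hc
      congr 1
      ext v
      simp only [Finset.mem_filter, Finset.mem_univ, true_and]
      constructor
      · rintro ⟨_, h⟩; exact h
      · intro h; exact ⟨h ▸ hc, h⟩
    have hle : ∑ c ∈ S, sz c ≤ 3 * b + 1 := by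
      rw [← hcard1]
      calc (univ.filter (fun v => C v ∈ S)).card
          ≤ (univ.filter (fun v => v.1 = i)).card := Finset.card_le_card hsub
        _ = 3 * b + 1 := hpcard i
    have h3le : 3 * S.card ≤ ∑ c ∈ S, sz c := by
      calc 3 * S.card = ∑ _c ∈ S, 3 := by
            rw [Finset.sum_const, smul_eq_mul, mul_comm]
        _ ≤ ∑ c ∈ S, sz c := Finset.sum_le_sum (fun c hc => by
            rw [hS, Finset.mem_filter, hA, Finset.mem_filter] at hc
            exact hc.1.2)
    omega
  -- hence at most k*b big classes in total
  have hAcard : A.card ≤ k * b := by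
    have h1 : A.card = ∑ i : Fin k, (A.filter (fun c => P c = i)).card :=
      Finset.card_eq_sum_card_fiberwise (fun c _ => Finset.mem_univ (P c))
    rw [h1]
    calc ∑ i : Fin k, (A.filter (fun c => P c = i)).card
        ≤ ∑ _i : Fin k, b := Finset.sum_le_sum (fun i _ => hSi i)
      _ = k * b := by simp [Finset.sum_const, mul_comm]
  -- total count of vertices
  have htot : ∑ c : Fin q, sz c = 3 * (k * b) + k := by
    have h1 : (univ : Finset (Σ _ : Fin k, Fin (3 * b + 1))).card = ∑ c : Fin q, sz c :=
      Finset.card_eq_sum_card_fiberwise (fun v _ => Finset.mem_univ (C v))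
    rw [← h1, Finset.card_univ]
    simp only [Fintype.card_sigma, Fintype.card_fin, Finset.sum_const,
      Finset.card_univ, smul_eq_mul]
    ring
  obtain ⟨K, hK⟩ : ∃ K, k * b = K := ⟨_, rfl⟩
  rw [hK] at hqdef hAcard htot
  by_cases hall : ∀ c : Fin q, 3 ≤ sz c
  · have hAuniv : A = univ := by
      rw [hA]
      exact Finset.filter_true_of_mem (fun c _ => hall c)
    rw [hAuniv, Finset.card_univ, Fintype.card_fin] at hAcard
    omega
  · push_neg at hall
    obtain ⟨c0, hc0⟩ := hall
    have h3 : ∀ c : Fin q, sz c ≤ 3 := by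
      intro c
      have h1 : sz c ≤ sz c0 + 1 := hEq c c0
      omega
    have hsum_le : ∑ c : Fin q, sz c
        ≤ 3 * A.card + 2 * (univ.filter (fun c : Fin q => ¬ 3 ≤ sz c)).card := by
      calc ∑ c : Fin q, sz c ≤ ∑ c : Fin q, (if 3 ≤ sz c then 3 else 2) :=
            Finset.sum_le_sum (fun c _ => by
              by_cases h : 3 ≤ sz c
              · rw [if_pos h]; exact h3 c
              · rw [if_neg h]; omega)
        _ = 3 * A.card + 2 * (univ.filter (fun c : Fin q => ¬ 3 ≤ sz c)).card := by
            rw [Finset.sum_ite, Finset.sum_const, Finset.sum_const,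
              smul_eq_mul, smul_eq_mul, hA]
            ring
    have hcards : A.card + (univ.filter (fun c : Fin q => ¬ 3 ≤ sz c)).card = q := by
      rw [hA, Finset.card_filter_add_card_filter_not, Finset.card_univ,
        Fintype.card_fin]
    omega
end

section
/- Let k ≥ 3 and n = 3b+1 for a positive integer b. Then for every q ≥ kb + ⌈k/2⌉, the graph K_{k*n} admits an equitable (q,1)-tree-coloring; moreover va≡₁(K_{k*n}) = kb + ⌈k/2⌉. -/
open Finset

/-! ### Auxiliary machinery -/

/-- coloring function on positions: `t` triples, then `u` pairs, then singletons -/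
def myG (t u : ℕ) (m : ℕ) : ℕ :=
  if m < 3*t then m/3
  else if m < 3*t + 2*u then t + (m - 3*t)/2
  else t + u + (m - (3*t + 2*u))

/-- linear position of a vertex: first the `3b`-blocks of each part, then the leftovers -/
def myPos (k b : ℕ) (v : Σ _ : Fin k, Fin (3*b+1)) : ℕ :=
  if v.2.val < 3*b then 3*b*v.1.val + v.2.val else 3*(k*b) + v.1.val

lemma myPos_lt (k b : ℕ) (v : Σ _ : Fin k, Fin (3*b+1)) :
    myPos k b v < 3*(k*b) + k := by
  have h1 := v.1.isLt; have h2 := v.2.isLt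
  unfold myPos
  split
  · have : v.1.val + 1 ≤ k := h1
    nlinarith
  · omega

lemma myPos_inj (k b : ℕ) : Function.Injective (myPos k b) := by
  rintro ⟨⟨i, hi⟩, ⟨j, hj⟩⟩ ⟨⟨i', hi'⟩, ⟨j', hj'⟩⟩ h
  unfold myPos at h
  simp only at h
  have hik : i + 1 ≤ k := hi
  have hik' : i' + 1 ≤ k := hi'
  split_ifs at h with h1 h2 h2
  · have hii : i = i' := by
      rcases lt_trichotomy i i' with h'|h'|h'
      · exfalso; nlinarith
      · exact h'
      · exfalso; nlinarith
    subst hii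
    have : j = j' := by omega
    subst this; rfl
  · exfalso
    have : 3*b*i + j < 3*(k*b) := by nlinarith
    omega
  · exfalso
    have : 3*b*i' + j' < 3*(k*b) := by nlinarith
    omega
  · have hii : i = i' := by omega
    subst hii
    have : j = j' := by omega
    subst this; rfl

lemma myPos_form (k b : ℕ) (v : Σ _ : Fin k, Fin (3*b+1)) (h : myPos k b v < 3*(k*b)) :
    v.2.val < 3*b ∧ myPos k b v = 3*b*v.1.val + v.2.val := by
  unfold myPos at *
  split at h
  · exact ⟨‹_›, by rw [if_pos ‹_›]⟩
  · omega

lemma part_det (b i j c : ℕ) (hb : 1 ≤ b) (hj : j < 3*b) (hdiv : (3*b*i + j)/3 = c) :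
    i = c / b := by
  subst hdiv
  rw [show 3*b*i + j = 3*(b*i) + j by ring, Nat.mul_add_div (by norm_num),
    Nat.mul_add_div hb, Nat.div_eq_of_lt (by omega)]
  omega

lemma card_sigma' (k b : ℕ) :
    Fintype.card (Σ _ : Fin k, Fin (3*b+1)) = 3*(k*b) + k := by
  simp [Fintype.card_sigma]
  ring

lemma myPos_image (k b : ℕ) :
    (univ : Finset (Σ _ : Fin k, Fin (3*b+1))).image (myPos k b)
      = range (3*(k*b) + k) := by
  apply Finset.eq_of_subset_of_card_le
  · intro m hm
    simp only [mem_image, mem_range] at hm ⊢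
    obtain ⟨v, _, rfl⟩ := hm
    exact myPos_lt k b v
  · rw [card_range, Finset.card_image_of_injective _ (myPos_inj k b), card_univ,
      card_sigma' k b]

lemma card_fiber_eq (k b : ℕ) (P : ℕ → Prop) [DecidablePred P] :
    (univ.filter (fun v : Σ _ : Fin k, Fin (3*b+1) => P (myPos k b v))).card
      = ((range (3*(k*b) + k)).filter P).card := by
  rw [← myPos_image, Finset.filter_image,
    Finset.card_image_of_injective _ (myPos_inj k b)]

lemma card_fiber_eq' (k b cval t u : ℕ) :
    (univ.filter (fun v : Σ _ : Fin k, Fin (3*b+1) => myG t u (myPos k b v) = cval)).card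
      = ((range (3*(k*b) + k)).filter (fun m => myG t u m = cval)).card :=
  card_fiber_eq k b (fun m => myG t u m = cval)

lemma myG_lt (N q t u m : ℕ) (ht : t = N - 2*q) (hu : u = N - 3*t - (q - t))
    (hN : N ≤ 3*q) (hm : m < N) : myG t u m < q := by
  unfold myG; split_ifs <;> omega

lemma myG_fiber_card (N q t u : ℕ) (ht : t = N - 2*q) (hu : u = N - 3*t - (q - t))
    (hN : N ≤ 3*q) (c : ℕ) (hc : c < q) :
    ((range N).filter (fun m => myG t u m = c)).card
      = if c < t then 3 else if c < t + u then 2 else if c < N - u then 1 else 0 := by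
  by_cases h1 : c < t
  · rw [if_pos h1]
    have hset : (range N).filter (fun m => myG t u m = c) = Finset.Ico (3*c) (3*c+3) := by
      ext m
      simp only [mem_filter, mem_range, mem_Ico]; unfold myG
      split_ifs <;> omega
    rw [hset, Nat.card_Ico]; omega
  · rw [if_neg h1]
    by_cases h2 : c < t + u
    · rw [if_pos h2]
      have hset : (range N).filter (fun m => myG t u m = c)
          = Finset.Ico (3*t + 2*(c-t)) (3*t + 2*(c-t) + 2) := by
        ext m
        simp only [mem_filter, mem_range, mem_Ico]; unfold myG
        split_ifs <;> omega
      rw [hset, Nat.card_Ico]; omega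
    · rw [if_neg h2]
      by_cases h3 : c < N - u
      · rw [if_pos h3]
        have hset : (range N).filter (fun m => myG t u m = c)
            = Finset.Ico (3*t + 2*u + (c - t - u)) (3*t + 2*u + (c - t - u) + 1) := by
          ext m
          simp only [mem_filter, mem_range, mem_Ico]; unfold myG
          split_ifs <;> omega
        rw [hset, Nat.card_Ico]; omega
      · rw [if_neg h3]
        have hset : (range N).filter (fun m => myG t u m = c) = ∅ := by
          ext m
          simp only [mem_filter, mem_range, Finset.notMem_empty, iff_false, not_and]; unfold myG
          intro hm
          split_ifs <;> omega
        rw [hset]; rfl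

lemma myG_lt_t_bounds (N q t u m c : ℕ) (ht : t = N - 2*q) (hu : u = N - 3*t - (q - t))
    (hN : N ≤ 3*q) (hm : m < N) (hG : myG t u m = c) (hc : c < t) :
    3*c ≤ m ∧ m < 3*c + 3 ∧ m / 3 = c := by
  unfold myG at hG; split_ifs at hG <;> omega

lemma part_card (k b : ℕ) (i : Fin k) :
    (univ.filter (fun v : Σ _ : Fin k, Fin (3*b+1) => v.1 = i)).card = 3*b+1 := by
  have : (univ.filter (fun v : Σ _ : Fin k, Fin (3*b+1) => v.1 = i))
      = univ.image (fun j : Fin (3*b+1) => (⟨i, j⟩ : Σ _ : Fin k, Fin (3*b+1))) := by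
    ext ⟨i', j⟩
    simp only [mem_filter, mem_univ, true_and, mem_image]
    constructor
    · rintro rfl; exact ⟨j, rfl⟩
    · rintro ⟨j', hj⟩; cases hj; rfl
  rw [this, Finset.card_image_of_injective, card_univ, Fintype.card_fin]
  intro a b' h
  simpa using h

lemma constructionCore (k b q : ℕ) (hk : 3 ≤ k) (hb : 1 ≤ b)
    (hq : k*b + (k+1)/2 ≤ q) :
    ∃ C : (Σ _ : Fin k, Fin (3*b+1)) → Fin q, EquitableSizes C ∧
      ∀ v w x, C w = C v → C x = C v → v.1 ≠ w.1 → v.1 ≠ x.1 → w = x := by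
  obtain ⟨t, ht⟩ : ∃ t, t = (3*(k*b)+k) - 2*q := ⟨_, rfl⟩
  obtain ⟨u, hu⟩ : ∃ u, u = (3*(k*b)+k) - 3*t - (q - t) := ⟨_, rfl⟩
  have hN3 : 3*(k*b)+k ≤ 3*q := by omega
  have hbound : ∀ v : Σ _ : Fin k, Fin (3*b+1), myG t u (myPos k b v) < q :=
    fun v => myG_lt (3*(k*b)+k) q t u _ ht hu hN3 (myPos_lt k b v)
  have hfib : ∀ c : Fin q,
      (univ.filter fun v : Σ _ : Fin k, Fin (3*b+1) =>
          (⟨myG t u (myPos k b v), hbound v⟩ : Fin q) = c).card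
        = if c.val < t then 3 else if c.val < t + u then 2
          else if c.val < (3*(k*b)+k) - u then 1 else 0 := by
    intro c
    have h1 : (univ.filter fun v : Σ _ : Fin k, Fin (3*b+1) =>
          (⟨myG t u (myPos k b v), hbound v⟩ : Fin q) = c)
        = univ.filter (fun v => myG t u (myPos k b v) = c.val) := by
      apply Finset.filter_congr
      intro v _
      rw [Fin.ext_iff]
    rw [h1, card_fiber_eq' k b c.val t u,
      myG_fiber_card (3*(k*b)+k) q t u ht hu hN3 c.val c.isLt]
  refine ⟨fun v => ⟨myG t u (myPos k b v), hbound v⟩, ?_, ?_⟩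
  · intro i j
    rw [hfib i, hfib j]
    have hi := i.isLt
    have hj := j.isLt
    split_ifs <;> omega
  · intro v w x hw hx hvw hvx
    simp only [Fin.mk.injEq] at hw hx
    by_cases hct : myG t u (myPos k b v) < t
    · exfalso
      obtain ⟨cc, hcc⟩ : ∃ cc, myG t u (myPos k b v) = cc := ⟨_, rfl⟩
      rw [hcc] at hct
      have hv3 := myG_lt_t_bounds (3*(k*b)+k) q t u (myPos k b v) cc ht hu hN3
        (myPos_lt k b v) hcc hct
      have hw3 := myG_lt_t_bounds (3*(k*b)+k) q t u (myPos k b w) cc ht hu hN3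
        (myPos_lt k b w) (hw.trans hcc) hct
      have hvlt : myPos k b v < 3*(k*b) := by omega
      have hwlt : myPos k b w < 3*(k*b) := by omega
      obtain ⟨hv2, hveq⟩ := myPos_form k b v hvlt
      obtain ⟨hw2, hweq⟩ := myPos_form k b w hwlt
      have hdv := hv3.2.2
      have hdw := hw3.2.2
      rw [hveq] at hdv
      rw [hweq] at hdw
      have e1 := part_det b v.1.val v.2.val _ hb hv2 hdv
      have e2 := part_det b w.1.val w.2.val _ hb hw2 hdw
      exact hvw (Fin.ext (e1.trans e2.symm))
    · by_contra hwx
      have hcard : (univ.filter fun y : Σ _ : Fin k, Fin (3*b+1) =>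
          (⟨myG t u (myPos k b y), hbound y⟩ : Fin q)
            = (⟨myG t u (myPos k b v), hbound v⟩ : Fin q)).card ≤ 2 := by
        rw [hfib ⟨myG t u (myPos k b v), hbound v⟩]
        have hcval : (⟨myG t u (myPos k b v), hbound v⟩ : Fin q).val
            = myG t u (myPos k b v) := rfl
        split_ifs <;> omega
      have hsub : ({v, w, x} : Finset (Σ _ : Fin k, Fin (3*b+1)))
          ⊆ univ.filter (fun y => (⟨myG t u (myPos k b y), hbound y⟩ : Fin q)
            = (⟨myG t u (myPos k b v), hbound v⟩ : Fin q)) := by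
        intro y hy
        simp only [Finset.mem_insert, Finset.mem_singleton] at hy
        simp only [Finset.mem_filter, Finset.mem_univ, true_and]
        rcases hy with rfl|rfl|rfl
        · rfl
        · exact Fin.ext hw
        · exact Fin.ext hx
      have h3 : ({v, w, x} : Finset (Σ _ : Fin k, Fin (3*b+1))).card = 3 := by
        rw [Finset.card_eq_three]
        exact ⟨v, w, x, fun h => hvw (congrArg Sigma.fst h),
          fun h => hvx (congrArg Sigma.fst h), hwx, rfl⟩
      have := Finset.card_le_card hsub
      omega

lemma myConstruction (k b q : ℕ) (hk : 3 ≤ k) (hb : 1 ≤ b)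
    (hq : k*b + (k+1)/2 ≤ q) :
    IsEqTreeColoring (CompleteMultipartite k (fun _ => 3*b+1)) q := by
  obtain ⟨C, h1, h2⟩ := constructionCore k b q hk hb hq
  exact ⟨C, h1, fun v w x a c d e => h2 v w x a c d e⟩

lemma myLower (k b q : ℕ) (hk : 3 ≤ k) (hb : 1 ≤ b)
    (hq : q + 1 = k*b + (k+1)/2) :
    ¬ IsEqTreeColoring (CompleteMultipartite k (fun _ => 3*b+1)) q := by
  rintro ⟨C, hEq, hT⟩
  -- Step A: a class with at least 3 members lies in one part
  have hpart : ∀ c : Fin q, 3 ≤ (univ.filter fun v => C v = c).card →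
      ∀ v, C v = c → ∀ w, C w = c → v.1 = w.1 := by
    intro c h3 v hv w hw
    by_contra hne
    have hsd : ((univ.filter fun y => C y = c) \ {v, w}).Nonempty := by
      rw [← Finset.card_pos]
      have h1 := Finset.le_card_sdiff ({v, w}) (univ.filter fun y => C y = c)
      have h2 : ({v, w} : Finset _).card ≤ 2 :=
        (Finset.card_insert_le _ _).trans (by simp)
      omega
    obtain ⟨z, hz⟩ := hsd
    rw [Finset.mem_sdiff, Finset.mem_filter] at hz
    have hz1 : C z = c := hz.1.2
    have hzv : z ≠ v := fun h => hz.2 (by simp [h])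
    have hzw : z ≠ w := fun h => hz.2 (by simp [h])
    by_cases h1 : z.1 = v.1
    · have hvz : v = z := hT w v z (hv.trans hw.symm) (hz1.trans hw.symm)
        (fun h => hne h.symm) (fun h => hne ((h.trans h1).symm))
      exact hzv hvz.symm
    · have hwz : w = z := hT v w z (hw.trans hv.symm) (hz1.trans hv.symm)
        hne (fun h => h1 h.symm)
      exact hzw hwz.symm
  -- the part of each (big) class
  obtain ⟨pt, hpt⟩ : ∃ pt : Fin q → Fin k, ∀ c : Fin q, ∀ v, C v = c →
      3 ≤ (univ.filter fun y => C y = c).card → v.1 = pt c := by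
    refine ⟨fun c => if h : (univ.filter fun y => C y = c).Nonempty
      then h.choose.1 else ⟨0, by omega⟩, ?_⟩
    intro c v hv h3
    have hne : (univ.filter fun y => C y = c).Nonempty := ⟨v, by simp [hv]⟩
    simp only [dif_pos hne]
    have hcs := hne.choose_spec
    rw [Finset.mem_filter] at hcs
    exact hpart c h3 v hv _ hcs.2
  -- Step C: at most b big classes per part
  have hTpart : ∀ i : Fin k,
      (((univ.filter fun c : Fin q => 3 ≤ (univ.filter fun v => C v = c).card)).filter
        fun c => pt c = i).card ≤ b := by
    intro i
    set S := ((univ.filter fun c : Fin q =>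
      3 ≤ (univ.filter fun v => C v = c).card)).filter (fun c => pt c = i) with hS
    have h1 : S.card * 3 ≤ ∑ c ∈ S, (univ.filter fun v => C v = c).card := by
      have := Finset.card_nsmul_le_sum S (fun c => (univ.filter fun v => C v = c).card) 3
        (fun c hc => by
          rw [hS, Finset.mem_filter, Finset.mem_filter] at hc
          exact hc.1.2)
      simpa [smul_eq_mul, mul_comm] using this
    have h2 : ∑ c ∈ S, (univ.filter fun v => C v = c).card
        = (S.biUnion (fun c => univ.filter fun v => C v = c)).card := by
      rw [Finset.card_biUnion]
      intro c1 _ c2 _ hne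
      apply Finset.disjoint_left.mpr
      intro a ha1 ha2
      rw [Finset.mem_filter] at ha1 ha2
      exact hne (ha1.2.symm.trans ha2.2)
    have h3 : (S.biUnion (fun c => univ.filter fun v => C v = c))
        ⊆ univ.filter fun v => v.1 = i := by
      intro v hv
      rw [Finset.mem_biUnion] at hv
      obtain ⟨c, hc, hvc⟩ := hv
      rw [hS, Finset.mem_filter, Finset.mem_filter] at hc
      rw [Finset.mem_filter] at hvc ⊢
      refine ⟨Finset.mem_univ _, ?_⟩
      rw [← hc.2]
      exact hpt c v hvc.2 hc.1.2
    have h5 : (S.biUnion (fun c => univ.filter fun v => C v = c)).card ≤ 3*b+1 :=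
      le_trans (Finset.card_le_card h3) (le_of_eq (part_card k b i))
    omega
  -- Step E: at most k*b big classes in total
  have hTcard : (univ.filter fun c : Fin q =>
      3 ≤ (univ.filter fun v => C v = c).card).card ≤ k * b := by
    rw [Finset.card_eq_sum_card_fiberwise (f := pt) (t := univ)
      (fun c _ => Finset.mem_univ (pt c))]
    calc ∑ i : Fin k, (((univ.filter fun c : Fin q =>
          3 ≤ (univ.filter fun v => C v = c).card)).filter fun c => pt c = i).card
        ≤ ∑ _i : Fin k, b := Finset.sum_le_sum (fun i _ => hTpart i)
      _ = k * b := by simp [Finset.sum_const, mul_comm]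
  -- Step D: total count
  have hsum : ∑ c : Fin q, (univ.filter fun v => C v = c).card = 3*(k*b) + k := by
    rw [← Finset.card_eq_sum_card_fiberwise (fun v _ => Finset.mem_univ (C v)),
      Finset.card_univ]
    exact card_sigma' k b
  by_cases hbig : ∃ c : Fin q, 4 ≤ (univ.filter fun v => C v = c).card
  · obtain ⟨c0, hc0⟩ := hbig
    have hall : ∀ c : Fin q, 3 ≤ (univ.filter fun v => C v = c).card := by
      intro c
      have := hEq c0 c
      omega
    have hTuniv : (univ.filter fun c : Fin q =>
        3 ≤ (univ.filter fun v => C v = c).card) = univ :=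
      Finset.filter_true_of_mem (fun c _ => hall c)
    rw [hTuniv, Finset.card_univ, Fintype.card_fin] at hTcard
    omega
  · push_neg at hbig
    have hle : ∑ c : Fin q, (univ.filter fun v => C v = c).card
        ≤ ∑ c : Fin q, (if 3 ≤ (univ.filter fun v => C v = c).card then 3 else 2) := by
      apply Finset.sum_le_sum
      intro c _
      have := hbig c
      split_ifs <;> omega
    rw [Finset.sum_ite, Finset.sum_const, Finset.sum_const, smul_eq_mul, smul_eq_mul] at hle
    have hsplit := Finset.card_filter_add_card_filter_not
      (s := (univ : Finset (Fin q)))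
      (p := fun c => 3 ≤ (univ.filter fun v => C v = c).card)
    rw [Finset.card_univ, Fintype.card_fin] at hsplit
    omega

theorem stmt13 (k b : ℕ) (hk : 3 ≤ k) (hb : 1 ≤ b) :
    (∀ q, k * b + (k + 1) / 2 ≤ q →
        IsEqTreeColoring (CompleteMultipartite k (fun _ => 3 * b + 1)) q) ∧
    IsLeast {p : ℕ | ∀ q, p ≤ q →
        IsEqTreeColoring (CompleteMultipartite k (fun _ => 3 * b + 1)) q}
      (k * b + (k + 1) / 2) := by
  refine ⟨fun q hq => myConstruction k b q hk hb hq, fun q hq => myConstruction k b q hk hb hq, ?_⟩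
  intro p hp
  by_contra hlt
  push_neg at hlt
  exact myLower k b (k*b + (k+1)/2 - 1) hk hb (by omega) (hp _ (by omega))
end
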